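/- arXiv:2410.15993 — 3 statements merged into one kernel-verified Lean document; each statement's English description precedes it below -/
import Mathlib

section
/- There exists an even positive integer q, depending only on φ, with the following properties: (a) for every m ∈ ℕ and every j ∈ {1,2,3,4}, the j-th derivative of φ_m = Ψ_m ∘ φ is bounded on ℝ; (b) there exists a constant B̃ ∈ (0,∞), independent of m, such that |φ_m^{(j)}(x)| ≤ B̃(1+|x|^{j(m₁−1)}) for all x ∈ ℝ, all m ∈ ℕ and all j ∈ {1,2,3,4}. -/
noncomputable section
namespace Stmt2Aux

variable (a : ℝ) (k : ℕ)

def psi : ℝ → ℝ := fun y => y / (1 + a * y ^ (2*k+4))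

lemma pow_even_nonneg (y : ℝ) : 0 ≤ y ^ (2*k+4) := by
  rw [show 2*k+4 = 2*(k+2) by ring, pow_mul]; positivity

lemma den_pos (ha : 0 ≤ a) (y : ℝ) : 0 < 1 + a * y ^ (2*k+4) := by
  have := mul_nonneg ha (pow_even_nonneg k y); linarith

lemma psi_contDiff (ha : 0 ≤ a) : ContDiff ℝ 4 (psi a k) :=
  contDiff_id.div (contDiff_const.add (contDiff_const.mul (contDiff_id.pow _)))
    (fun y => (den_pos a k ha y).ne')

def psiD1 : ℝ → ℝ := fun y =>
  (1 - (2*(k:ℝ)+3) * a * y ^ (2*k+4)) / (1 + a * y ^ (2*k+4))^2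

def psiD2 : ℝ → ℝ := fun y =>
  ((2*(k:ℝ)+4) * a * y ^ (2*k+3) * ((2*(k:ℝ)+3) * (a * y ^ (2*k+4)) - (2*(k:ℝ)+5)))
    / (1 + a * y ^ (2*k+4))^3

def psiD3 : ℝ → ℝ := fun y =>
  (a * y ^ (2*k+2) * ((2*(2*(k:ℝ)+4)+4*(2*(k:ℝ)+4)^3) * (a * y ^ (2*k+4))
      - ((2*(k:ℝ)+4)^3-(2*(k:ℝ)+4)) * (1 + (a * y ^ (2*k+4))^2)))
    / (1 + a * y ^ (2*k+4))^4

def psiD4 : ℝ → ℝ := fun y =>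
  (a * y ^ (2*k+1) *
    (((2*(k:ℝ)+4)-(2*(k:ℝ)+4)^3)*((2*(k:ℝ)+4)-2)
    + (((2*(k:ℝ)+4)-(2*(k:ℝ)+4)^3)*(-2-3*(2*(k:ℝ)+4))
        + (2*(2*(k:ℝ)+4)+4*(2*(k:ℝ)+4)^3)*(2*(2*(k:ℝ)+4)-2)) * (a * y ^ (2*k+4))
    + ((2*(2*(k:ℝ)+4)+4*(2*(k:ℝ)+4)^3)*(-2-2*(2*(k:ℝ)+4))
        + ((2*(k:ℝ)+4)-(2*(k:ℝ)+4)^3)*(3*(2*(k:ℝ)+4)-2)) * (a * y ^ (2*k+4))^2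
    + (((2*(k:ℝ)+4)-(2*(k:ℝ)+4)^3)*(-2-(2*(k:ℝ)+4))) * (a * y ^ (2*k+4))^3))
    / (1 + a * y ^ (2*k+4))^5

lemma mono (c : ℝ) (n : ℕ) (y : ℝ) :
    HasDerivAt (fun y : ℝ => c * y ^ (n+1)) (c * (n+1) * y ^ n) y := by
  have h := (hasDerivAt_pow (n+1) y).const_mul c
  push_cast at h
  refine h.congr_deriv (Eq.symm ?_)
  ring

lemma mono' (c : ℝ) (n m : ℕ) (h : m + 1 = n) (y : ℝ) :
    HasDerivAt (fun y : ℝ => c * y ^ n) (c * n * y ^ m) y := by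
  subst h; have := mono c m y; push_cast at this ⊢; convert this using 1

lemma hasDerivAt_den (y : ℝ) :
    HasDerivAt (fun y : ℝ => 1 + a * y ^ (2*k+4)) (a * (2*k+4 : ℕ) * y ^ (2*k+3)) y :=
  (mono' a (2*k+4) (2*k+3) (by omega) y).const_add 1

lemma hasDerivAt_u (y : ℝ) :
    HasDerivAt (fun y : ℝ => a * y ^ (2*k+4)) (a * (2*k+4 : ℕ) * y ^ (2*k+3)) y :=
  mono' a (2*k+4) (2*k+3) (by omega) y

lemma hasDerivAt_psi (ha : 0 ≤ a) (y : ℝ) : HasDerivAt (psi a k) (psiD1 a k y) y := by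
  have h := (hasDerivAt_id y).div (hasDerivAt_den a k y) (den_pos a k ha y).ne'
  refine HasDerivAt.congr_deriv (f := psi a k) h (Eq.symm ?_)
  unfold psiD1
  congr 1
  simp only [id_eq]
  push_cast
  ring

lemma hasDerivAt_psiD1 (ha : 0 ≤ a) (y : ℝ) : HasDerivAt (psiD1 a k) (psiD2 a k y) y := by
  have hw := den_pos a k ha y
  have hnum := (mono' ((2*(k:ℝ)+3) * a) (2*k+4) (2*k+3) (by omega) y).const_sub 1
  have hden := (hasDerivAt_den a k y).pow 2
  have h := hnum.div hden (pow_ne_zero 2 hw.ne')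
  refine h.congr_deriv (Eq.symm ?_)
  unfold psiD2
  simp only [Pi.pow_apply, Pi.mul_apply, Pi.sub_apply]
  push_cast
  field_simp
  ring


lemma hasDerivAt_psiD2 (ha : 0 ≤ a) (y : ℝ) : HasDerivAt (psiD2 a k) (psiD3 a k y) y := by
  have hw := den_pos a k ha y
  have hnum := (mono' ((2*(k:ℝ)+4) * a) (2*k+3) (2*k+2) (by omega) y).mul
    (((hasDerivAt_u a k y).const_mul (2*(k:ℝ)+3)).sub_const (2*(k:ℝ)+5))
  have hden := (hasDerivAt_den a k y).pow 3
  have h := hnum.div hden (pow_ne_zero 3 hw.ne')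
  refine h.congr_deriv (Eq.symm ?_)
  unfold psiD3
  simp only [Pi.pow_apply, Pi.mul_apply, Pi.sub_apply]
  push_cast
  field_simp
  ring

lemma hasDerivAt_psiD3 (ha : 0 ≤ a) (y : ℝ) : HasDerivAt (psiD3 a k) (psiD4 a k y) y := by
  have hw := den_pos a k ha y
  have hnum := (mono' a (2*k+2) (2*k+1) (by omega) y).mul
    (((hasDerivAt_u a k y).const_mul (2*(2*(k:ℝ)+4)+4*(2*(k:ℝ)+4)^3)).sub
      ((((hasDerivAt_u a k y).pow 2).const_add 1).const_mul ((2*(k:ℝ)+4)^3-(2*(k:ℝ)+4))))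
  have hden := (hasDerivAt_den a k y).pow 4
  have h := hnum.div hden (pow_ne_zero 4 hw.ne')
  refine h.congr_deriv (Eq.symm ?_)
  unfold psiD4
  simp only [Pi.pow_apply, Pi.mul_apply, Pi.sub_apply]
  push_cast
  field_simp
  ring



lemma pow_even_nonneg' (y : ℝ) : 0 ≤ y ^ (2*k+4) := by
  rw [show 2*k+4 = 2*(k+2) by ring, pow_mul]; positivity

-- core estimate, uniform version
lemma core_u (ha : 0 < a) (e : ℕ) (he : e ≤ 2*k+4) (t : ℝ) (ht : 0 ≤ t) :
    a * t^e / (1 + a * t^(2*k+4))^2 ≤ 1 + a := by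
  have hQ : 0 ≤ a * t^(2*k+4) := mul_nonneg ha.le (by positivity)
  rw [div_le_iff₀ (by positivity)]
  rcases le_total t 1 with h | h
  · have h1 : t^e ≤ 1 := pow_le_one₀ ht h
    nlinarith [sq_nonneg (1 + a*t^(2*k+4)), mul_nonneg ha.le (mul_nonneg hQ hQ)]
  · have h1 : t^e ≤ t^(2*k+4) := pow_le_pow_right₀ h he
    have h2 : a * t^e ≤ a * t^(2*k+4) := by nlinarith
    nlinarith [sq_nonneg (1 + a*t^(2*k+4)), mul_nonneg ha.le (mul_nonneg hQ hQ)]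

-- core estimate, decay version
lemma core_d (ha : 0 < a) (e : ℕ) (he : e ≤ 2*k+4) (t : ℝ) (ht : 1 ≤ t) :
    a * t^e / (1 + a * t^(2*k+4))^2 ≤ (1/a) / t^(2*k+4) := by
  have ht0 : (0:ℝ) < t := lt_of_lt_of_le one_pos ht
  have htQ : (0:ℝ) < t^(2*k+4) := by positivity
  have hQ : 0 < a * t^(2*k+4) := mul_pos ha htQ
  rw [div_le_div_iff₀ (by positivity) htQ]
  have h1 : t^e ≤ t^(2*k+4) := pow_le_pow_right₀ ht he
  have h2 : a * t^e ≤ a * t^(2*k+4) := by nlinarith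
  have key : (a * t^e) * (a * t^(2*k+4)) ≤ (1 + a * t^(2*k+4))^2 := by nlinarith
  rw [one_div_mul_eq_div, le_div_iff₀ ha]
  nlinarith [key]

lemma abs_pow_even (y : ℝ) : y^(2*k+4) = |y|^(2*k+4) := by
  rw [← abs_pow, abs_of_nonneg (pow_even_nonneg' k y)]

lemma master_u (ha : 0 < a) (e p : ℕ) (he : e ≤ 2*k+4) (c C G : ℝ) (y : ℝ)
    (hcC : c ≤ C) (hc : 0 ≤ c) (hG : |G| ≤ c * (1 + a * y^(2*k+4))^p) :
    |a * y^e * G / (1 + a * y^(2*k+4))^(p+2)| ≤ C * (1 + a) := by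
  have hw : 0 < 1 + a * y^(2*k+4) := by
    have := mul_nonneg ha.le (pow_even_nonneg' k y); linarith
  calc |a * y^e * G / (1 + a * y^(2*k+4))^(p+2)|
      = a * |y|^e * |G| / (1 + a * y^(2*k+4))^(p+2) := by
        rw [abs_div, abs_mul, abs_mul, abs_of_pos ha, abs_pow, abs_pow,
          abs_of_pos hw]
    _ ≤ a * |y|^e * (c * (1 + a * y^(2*k+4))^p) / (1 + a * y^(2*k+4))^(p+2) := by
        gcongr
    _ = c * (a * |y|^e / (1 + a * y^(2*k+4))^2) := by
        have h1 : (1 + a * y^(2*k+4))^p ≠ 0 := pow_ne_zero _ hw.ne'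
        rw [pow_add (1 + a * y^(2*k+4)) p 2,
          show a*|y|^e*(c*(1 + a * y^(2*k+4))^p) = c*(a*|y|^e)*(1 + a * y^(2*k+4))^p from by ring,
          show (1 + a * y^(2*k+4))^p*(1 + a * y^(2*k+4))^2
              = (1 + a * y^(2*k+4))^2*(1 + a * y^(2*k+4))^p from mul_comm _ _,
          mul_div_mul_right _ _ h1, mul_div_assoc]
    _ ≤ C * (1 + a) := by
        apply mul_le_mul hcC ?_ (by positivity) (le_trans hc hcC)
        rw [abs_pow_even k y]
        exact core_u a k ha e he |y| (abs_nonneg y)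

lemma master_d (ha : 0 < a) (e p : ℕ) (he : e ≤ 2*k+4) (c C G : ℝ) (y : ℝ)
    (hcC : c ≤ C) (hc : 0 ≤ c) (hy : 1 ≤ y) (hG : |G| ≤ c * (1 + a * y^(2*k+4))^p) :
    |a * y^e * G / (1 + a * y^(2*k+4))^(p+2)| ≤ (C/a) / y^(2*k+4) := by
  have hy0 : (0:ℝ) ≤ y := by linarith
  have hw : 0 < 1 + a * y^(2*k+4) := by
    have := mul_nonneg ha.le (pow_even_nonneg' k y); linarith
  calc |a * y^e * G / (1 + a * y^(2*k+4))^(p+2)|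
      = a * |y|^e * |G| / (1 + a * y^(2*k+4))^(p+2) := by
        rw [abs_div, abs_mul, abs_mul, abs_of_pos ha, abs_pow, abs_pow,
          abs_of_pos hw]
    _ ≤ a * |y|^e * (c * (1 + a * y^(2*k+4))^p) / (1 + a * y^(2*k+4))^(p+2) := by
        gcongr
    _ = c * (a * y^e / (1 + a * y^(2*k+4))^2) := by
        have h1 : (1 + a * y^(2*k+4))^p ≠ 0 := pow_ne_zero _ hw.ne'
        rw [pow_add (1 + a * y^(2*k+4)) p 2, abs_of_nonneg hy0,
          show a*y^e*(c*(1 + a * y^(2*k+4))^p) = c*(a*y^e)*(1 + a * y^(2*k+4))^p from by ring,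
          show (1 + a * y^(2*k+4))^p*(1 + a * y^(2*k+4))^2
              = (1 + a * y^(2*k+4))^2*(1 + a * y^(2*k+4))^p from mul_comm _ _,
          mul_div_mul_right _ _ h1, mul_div_assoc]
    _ ≤ c * ((1/a) / y^(2*k+4)) := by
        apply mul_le_mul_of_nonneg_left ?_ hc
        exact core_d a k ha e he y hy
    _ = (c/a) / y^(2*k+4) := by ring
    _ ≤ (C/a) / y^(2*k+4) := by gcongr

lemma div_chain {n w c b yq : ℝ} (hn : 0 ≤ n) (hw : 0 < w) (hyq : 0 < yq) (hb : 0 < b)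
    (hc : 0 ≤ c) (h1 : n ≤ c*w) (h2 : b*yq ≤ w) : n/w^2 ≤ (c/b)/yq := by
  rw [div_div, div_le_div_iff₀ (by positivity) (by positivity)]
  nlinarith [mul_le_mul h1 h2 (mul_pos hb hyq).le (by positivity)]

def Cq (k : ℕ) : ℝ := 30*(2*(k:ℝ)+4)^4

lemma Cq_pos (k : ℕ) : 0 < Cq k := by unfold Cq; positivity

lemma it1 (ha : 0 ≤ a) : iteratedDeriv 1 (psi a k) = psiD1 a k := by
  funext y; rw [iteratedDeriv_one]; exact (hasDerivAt_psi a k ha y).deriv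

lemma it2 (ha : 0 ≤ a) : iteratedDeriv 2 (psi a k) = psiD2 a k := by
  rw [show (2:ℕ) = 1+1 by norm_num, iteratedDeriv_succ, it1 a k ha]
  funext y; exact (hasDerivAt_psiD1 a k ha y).deriv

lemma it3 (ha : 0 ≤ a) : iteratedDeriv 3 (psi a k) = psiD3 a k := by
  rw [show (3:ℕ) = 2+1 by norm_num, iteratedDeriv_succ, it2 a k ha]
  funext y; exact (hasDerivAt_psiD2 a k ha y).deriv

lemma it4 (ha : 0 ≤ a) : iteratedDeriv 4 (psi a k) = psiD4 a k := by
  rw [show (4:ℕ) = 3+1 by norm_num, iteratedDeriv_succ, it3 a k ha]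
  funext y; exact (hasDerivAt_psiD3 a k ha y).deriv

lemma hG2bound (ha : 0 < a) (y : ℝ) :
    |(2*(k:ℝ)+4) * ((2*(k:ℝ)+3) * (a * y ^ (2*k+4)) - (2*(k:ℝ)+5))|
      ≤ ((2*(k:ℝ)+4)*(2*(k:ℝ)+5)) * (1 + a * y^(2*k+4))^1 := by
  have hu : 0 ≤ a * y^(2*k+4) := mul_nonneg ha.le (pow_even_nonneg' k y)
  have hk : (0:ℝ) ≤ (k:ℝ) := Nat.cast_nonneg k
  rw [pow_one]
  rw [abs_le]
  constructor <;> nlinarith [mul_nonneg hk hu]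

lemma hG3bound (ha : 0 < a) (y : ℝ) :
    |(2*(2*(k:ℝ)+4)+4*(2*(k:ℝ)+4)^3) * (a * y ^ (2*k+4))
      - ((2*(k:ℝ)+4)^3-(2*(k:ℝ)+4)) * (1 + (a * y ^ (2*k+4))^2)|
      ≤ (6*(2*(k:ℝ)+4)^3) * (1 + a * y^(2*k+4))^2 := by
  have hu : 0 ≤ a * y^(2*k+4) := mul_nonneg ha.le (pow_even_nonneg' k y)
  have hk : (0:ℝ) ≤ (k:ℝ) := Nat.cast_nonneg k
  set q : ℝ := 2*(k:ℝ)+4 with hq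
  have hq4 : (4:ℝ) ≤ q := by rw [hq]; linarith
  set u : ℝ := a * y^(2*k+4) with hudef
  have hq0 : (0:ℝ) ≤ q := by linarith
  have hsq : (1:ℝ) ≤ q^2 := by nlinarith
  have hq3 : q ≤ q^3 := by nlinarith [mul_nonneg hq0 (sub_nonneg.2 hsq)]
  rw [abs_le]
  constructor <;> nlinarith [mul_nonneg hu hu, mul_nonneg (mul_nonneg hu hu) hu,
    mul_nonneg (sub_nonneg.2 hq3) hu, mul_nonneg (sub_nonneg.2 hq3) (mul_nonneg hu hu),
    mul_nonneg (mul_nonneg hk hk) hu, mul_nonneg hk hu,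
    mul_nonneg (mul_nonneg (mul_nonneg hk hk) hk) hu]

lemma hG4bound (ha : 0 < a) (y : ℝ) :
    |((2*(k:ℝ)+4)-(2*(k:ℝ)+4)^3)*((2*(k:ℝ)+4)-2)
    + (((2*(k:ℝ)+4)-(2*(k:ℝ)+4)^3)*(-2-3*(2*(k:ℝ)+4))
        + (2*(2*(k:ℝ)+4)+4*(2*(k:ℝ)+4)^3)*(2*(2*(k:ℝ)+4)-2)) * (a * y ^ (2*k+4))
    + ((2*(2*(k:ℝ)+4)+4*(2*(k:ℝ)+4)^3)*(-2-2*(2*(k:ℝ)+4))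
        + ((2*(k:ℝ)+4)-(2*(k:ℝ)+4)^3)*(3*(2*(k:ℝ)+4)-2)) * (a * y ^ (2*k+4))^2
    + (((2*(k:ℝ)+4)-(2*(k:ℝ)+4)^3)*(-2-(2*(k:ℝ)+4))) * (a * y ^ (2*k+4))^3|
      ≤ (30*(2*(k:ℝ)+4)^4) * (1 + a * y^(2*k+4))^3 := by
  have hu : 0 ≤ a * y^(2*k+4) := mul_nonneg ha.le (pow_even_nonneg' k y)
  have hk : (0:ℝ) ≤ (k:ℝ) := Nat.cast_nonneg k
  set q : ℝ := 2*(k:ℝ)+4 with hq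
  have hq4 : (4:ℝ) ≤ q := by rw [hq]; linarith
  set u : ℝ := a * y^(2*k+4) with hudef
  have hq0 : (0:ℝ) ≤ q := by linarith
  have hsq : (1:ℝ) ≤ q^2 := by nlinarith
  have hq3 : q ≤ q^3 := by nlinarith [mul_nonneg hq0 (sub_nonneg.2 hsq)]
  have hq2 : (0:ℝ) < q := by linarith
  have huu : 0 ≤ u^2 := sq_nonneg u
  have huuu : 0 ≤ u^3 := by positivity
  rw [abs_le]
  constructor <;> nlinarith [mul_nonneg (sub_nonneg.2 hq3) hu,
    mul_nonneg (sub_nonneg.2 hq3) huu, mul_nonneg (sub_nonneg.2 hq3) huuu,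
    mul_nonneg hu hu, mul_nonneg (mul_nonneg hu hu) hu, mul_nonneg hk hu,
    mul_pos hq2 hq2, mul_nonneg (mul_nonneg hq2.le hq2.le) hu,
    mul_nonneg (mul_nonneg (mul_nonneg hq2.le hq2.le) hq2.le) hu,
    mul_nonneg (mul_nonneg (mul_nonneg (mul_nonneg hq2.le hq2.le) hq2.le) hq2.le) hu,
    mul_nonneg (mul_nonneg (mul_nonneg (mul_nonneg hq2.le hq2.le) hq2.le) hq2.le) huu,
    mul_nonneg (mul_nonneg (mul_nonneg (mul_nonneg hq2.le hq2.le) hq2.le) hq2.le) huuu]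

lemma psiD1_num_bounds (ha : 0 < a) (y : ℝ) :
    |1 - (2*(k:ℝ)+3) * a * y ^ (2*k+4)| ≤ Cq k * (1 + a * y^(2*k+4)) := by
  have hu : 0 ≤ a * y^(2*k+4) := mul_nonneg ha.le (pow_even_nonneg' k y)
  have hk : (0:ℝ) ≤ (k:ℝ) := Nat.cast_nonneg k
  unfold Cq
  set q : ℝ := 2*(k:ℝ)+4 with hq
  have hq4 : (4:ℝ) ≤ q := by rw [hq]; linarith
  have hq0 : (0:ℝ) ≤ q := by linarith
  have hsq : (1:ℝ) ≤ q^2 := by nlinarith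
  have hq3 : q ≤ q^3 := by nlinarith [mul_nonneg hq0 (sub_nonneg.2 hsq)]
  have hq4p : q ≤ q^4 := by
    nlinarith [mul_nonneg hq0 (sub_nonneg.2 hq3), mul_nonneg hq0 (by linarith : (0:ℝ) ≤ q - 1)]
  set u : ℝ := a * y^(2*k+4) with hudef
  have habs : |1 - (2*(k:ℝ)+3) * a * y ^ (2*k+4)| ≤ 1 + (2*(k:ℝ)+3) * u := by
    rw [abs_le]
    constructor <;> nlinarith [mul_nonneg hk hu]
  have key : 1 + (2*(k:ℝ)+3) * u ≤ (30*q^4) * (1+u) := by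
    nlinarith [mul_nonneg (sub_nonneg.2 hq4p) hu, hq4p, hq4]
  nlinarith [habs, key]

lemma bound_u (ha : 0 < a) (i : ℕ) (hi1 : 1 ≤ i) (hi4 : i ≤ 4) (y : ℝ) :
    |iteratedDeriv i (psi a k) y| ≤ Cq k * (1 + a) := by
  have hu : 0 ≤ a * y^(2*k+4) := mul_nonneg ha.le (pow_even_nonneg' k y)
  have hk : (0:ℝ) ≤ (k:ℝ) := Nat.cast_nonneg k
  have hw : 0 < 1 + a * y^(2*k+4) := by linarith
  interval_cases i
  · rw [it1 a k ha.le]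
    unfold psiD1
    rw [abs_div, abs_of_pos (pow_pos hw 2), div_le_iff₀ (pow_pos hw 2)]
    have habs := psiD1_num_bounds a k ha y
    have h3 : (1 + a * y^(2*k+4)) ≤ (1+a) * (1 + a * y^(2*k+4))^2 := by
      nlinarith [mul_nonneg hu hu, mul_nonneg ha.le hu, mul_nonneg ha.le (mul_nonneg hu hu)]
    nlinarith [habs, mul_le_mul_of_nonneg_left h3 (Cq_pos k).le]
  · rw [it2 a k ha.le, show psiD2 a k y
      = a * y^(2*k+3) * ((2*(k:ℝ)+4) * ((2*(k:ℝ)+3) * (a * y ^ (2*k+4)) - (2*(k:ℝ)+5)))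
        / (1 + a * y^(2*k+4))^(1+2) from by unfold psiD2; ring]
    refine master_u a k ha (2*k+3) 1 (by omega) ((2*(k:ℝ)+4)*(2*(k:ℝ)+5)) (Cq k) _ y
      ?_ (by positivity) (hG2bound a k ha y)
    unfold Cq
    nlinarith [hk, mul_nonneg hk hk, mul_nonneg (mul_nonneg hk hk) hk,
      mul_nonneg (mul_nonneg (mul_nonneg hk hk) hk) hk]
  · rw [it3 a k ha.le, show psiD3 a k y
      = a * y^(2*k+2) * ((2*(2*(k:ℝ)+4)+4*(2*(k:ℝ)+4)^3) * (a * y ^ (2*k+4))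
          - ((2*(k:ℝ)+4)^3-(2*(k:ℝ)+4)) * (1 + (a * y ^ (2*k+4))^2))
        / (1 + a * y^(2*k+4))^(2+2) from by unfold psiD3; ring]
    refine master_u a k ha (2*k+2) 2 (by omega) (6*(2*(k:ℝ)+4)^3) (Cq k) _ y
      ?_ (by positivity) (hG3bound a k ha y)
    unfold Cq
    nlinarith [hk, mul_nonneg hk hk, mul_nonneg (mul_nonneg hk hk) hk,
      mul_nonneg (mul_nonneg (mul_nonneg hk hk) hk) hk]
  · rw [it4 a k ha.le, show psiD4 a k y
      = a * y^(2*k+1) * (((2*(k:ℝ)+4)-(2*(k:ℝ)+4)^3)*((2*(k:ℝ)+4)-2)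
        + (((2*(k:ℝ)+4)-(2*(k:ℝ)+4)^3)*(-2-3*(2*(k:ℝ)+4))
            + (2*(2*(k:ℝ)+4)+4*(2*(k:ℝ)+4)^3)*(2*(2*(k:ℝ)+4)-2)) * (a * y ^ (2*k+4))
        + ((2*(2*(k:ℝ)+4)+4*(2*(k:ℝ)+4)^3)*(-2-2*(2*(k:ℝ)+4))
            + ((2*(k:ℝ)+4)-(2*(k:ℝ)+4)^3)*(3*(2*(k:ℝ)+4)-2)) * (a * y ^ (2*k+4))^2
        + (((2*(k:ℝ)+4)-(2*(k:ℝ)+4)^3)*(-2-(2*(k:ℝ)+4))) * (a * y ^ (2*k+4))^3)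
        / (1 + a * y^(2*k+4))^(3+2) from by unfold psiD4; ring]
    exact master_u a k ha (2*k+1) 3 (by omega) (30*(2*(k:ℝ)+4)^4) (Cq k) _ y
      le_rfl (by positivity) (hG4bound a k ha y)

lemma bound_d (ha : 0 < a) (i : ℕ) (hi1 : 1 ≤ i) (hi4 : i ≤ 4) (y : ℝ) (hy : 1 ≤ y) :
    |iteratedDeriv i (psi a k) y| ≤ (Cq k / a) / y^(2*k+4) := by
  have hu : 0 ≤ a * y^(2*k+4) := mul_nonneg ha.le (pow_even_nonneg' k y)
  have hk : (0:ℝ) ≤ (k:ℝ) := Nat.cast_nonneg k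
  have hw : 0 < 1 + a * y^(2*k+4) := by linarith
  have hy0 : (0:ℝ) < y := lt_of_lt_of_le one_pos hy
  interval_cases i
  · rw [it1 a k ha.le]
    unfold psiD1
    rw [abs_div, abs_of_pos (pow_pos hw 2)]
    exact div_chain (abs_nonneg _) hw (pow_pos hy0 _) ha (Cq_pos k).le
      (psiD1_num_bounds a k ha y) (by linarith)
  · rw [it2 a k ha.le, show psiD2 a k y
      = a * y^(2*k+3) * ((2*(k:ℝ)+4) * ((2*(k:ℝ)+3) * (a * y ^ (2*k+4)) - (2*(k:ℝ)+5)))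
        / (1 + a * y^(2*k+4))^(1+2) from by unfold psiD2; ring]
    refine master_d a k ha (2*k+3) 1 (by omega) ((2*(k:ℝ)+4)*(2*(k:ℝ)+5)) (Cq k) _ y
      ?_ (by positivity) hy (hG2bound a k ha y)
    unfold Cq
    nlinarith [hk, mul_nonneg hk hk, mul_nonneg (mul_nonneg hk hk) hk,
      mul_nonneg (mul_nonneg (mul_nonneg hk hk) hk) hk]
  · rw [it3 a k ha.le, show psiD3 a k y
      = a * y^(2*k+2) * ((2*(2*(k:ℝ)+4)+4*(2*(k:ℝ)+4)^3) * (a * y ^ (2*k+4))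
          - ((2*(k:ℝ)+4)^3-(2*(k:ℝ)+4)) * (1 + (a * y ^ (2*k+4))^2))
        / (1 + a * y^(2*k+4))^(2+2) from by unfold psiD3; ring]
    refine master_d a k ha (2*k+2) 2 (by omega) (6*(2*(k:ℝ)+4)^3) (Cq k) _ y
      ?_ (by positivity) hy (hG3bound a k ha y)
    unfold Cq
    nlinarith [hk, mul_nonneg hk hk, mul_nonneg (mul_nonneg hk hk) hk,
      mul_nonneg (mul_nonneg (mul_nonneg hk hk) hk) hk]
  · rw [it4 a k ha.le, show psiD4 a k y
      = a * y^(2*k+1) * (((2*(k:ℝ)+4)-(2*(k:ℝ)+4)^3)*((2*(k:ℝ)+4)-2)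
        + (((2*(k:ℝ)+4)-(2*(k:ℝ)+4)^3)*(-2-3*(2*(k:ℝ)+4))
            + (2*(2*(k:ℝ)+4)+4*(2*(k:ℝ)+4)^3)*(2*(2*(k:ℝ)+4)-2)) * (a * y ^ (2*k+4))
        + ((2*(2*(k:ℝ)+4)+4*(2*(k:ℝ)+4)^3)*(-2-2*(2*(k:ℝ)+4))
            + ((2*(k:ℝ)+4)-(2*(k:ℝ)+4)^3)*(3*(2*(k:ℝ)+4)-2)) * (a * y ^ (2*k+4))^2
        + (((2*(k:ℝ)+4)-(2*(k:ℝ)+4)^3)*(-2-(2*(k:ℝ)+4))) * (a * y ^ (2*k+4))^3)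
        / (1 + a * y^(2*k+4))^(3+2) from by unfold psiD4; ring]
    exact master_d a k ha (2*k+1) 3 (by omega) (30*(2*(k:ℝ)+4)^4) (Cq k) _ y
      le_rfl (by positivity) hy (hG4bound a k ha y)


lemma arith_b (B CC s : ℝ) (hB : 0 < B) (hCC : 0 ≤ CC) (hs : 0 ≤ s) (j : ℕ) (hj4 : j ≤ 4) :
    ((Nat.factorial j : ℕ) : ℝ) * CC * (max 1 (2*B*(1+s)))^j ≤ 384 * CC * (1+2*B)^4 * (1 + s^j) := by
  have hM0 : (0:ℝ) ≤ max 1 (2*B*(1+s)) := le_trans zero_le_one (le_max_left _ _)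
  have hD : max 1 (2*B*(1+s)) ≤ (1+2*B)*(1+s) := by
    apply max_le (by nlinarith) (by nlinarith)
  have h4 : (1+s)^j ≤ 2^j*(1+s^j) := by
    rcases le_total s 1 with h|h
    · have h1 : (1+s)^j ≤ 2^j := pow_le_pow_left₀ (by linarith) (by linarith) j
      have h2 : (0:ℝ) ≤ 2^j * s^j := by positivity
      nlinarith
    · have h1 : (1+s)^j ≤ (2*s)^j := pow_le_pow_left₀ (by linarith) (by linarith) j
      have h2 : (0:ℝ) < (2:ℝ)^j := by positivity
      rw [mul_pow] at h1
      nlinarith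
  have h5 : (2:ℝ)^j ≤ 16 := by
    calc (2:ℝ)^j ≤ 2^4 := pow_le_pow_right₀ one_le_two hj4
      _ = 16 := by norm_num
  have h6 : ((Nat.factorial j : ℕ) : ℝ) ≤ 24 := by interval_cases j <;> norm_num [Nat.factorial]
  have h7 : (max 1 (2*B*(1+s)))^j ≤ (1+2*B)^j*(1+s)^j := by
    rw [← mul_pow]; exact pow_le_pow_left₀ hM0 hD j
  have h8 : (1+2*B)^j ≤ (1+2*B)^4 := pow_le_pow_right₀ (by linarith) hj4
  have hA : (1+s)^j ≤ 16*(1+s^j) := by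
    refine le_trans h4 (mul_le_mul_of_nonneg_right h5 (by positivity))
  have h9 : (1+2*B)^j*(1+s)^j ≤ (1+2*B)^4*(16*(1+s^j)) :=
    mul_le_mul h8 hA (by positivity) (by positivity)
  calc ((Nat.factorial j : ℕ) : ℝ) * CC * (max 1 (2*B*(1+s)))^j
      ≤ 24 * CC * ((1+2*B)^4*(16*(1+s^j))) := by
        refine mul_le_mul (mul_le_mul h6 le_rfl hCC (by norm_num))
          (le_trans h7 h9) (pow_nonneg hM0 j) (mul_nonneg (by norm_num) hCC)
    _ = 384 * CC * (1+2*B)^4 * (1 + s^j) := by ring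

lemma shift_iteratedDeriv (F : ℝ → ℝ) (cc : ℝ) (i : ℕ) (hi : 1 ≤ i) :
    iteratedDeriv i (fun t => F t - cc) = iteratedDeriv i F := by
  obtain ⟨i', rfl⟩ : ∃ i', i = i' + 1 := ⟨i - 1, by omega⟩
  have hd : (deriv fun t => F t - cc) = deriv F := by
    funext t
    exact deriv_sub_const (f := F) cc
  rw [iteratedDeriv_succ', iteratedDeriv_succ', hd]

end Stmt2Aux




open Filter

/-- For `φ` as in the context (C⁴, nonnegative, with growth
`φ(x) ≥ A|x|^{m₀}` for `|x| ≥ R` and derivative bounds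
`|φ^{(j)}(x)| ≤ B(1+|x|^{m₁−j})`, `j = 0,…,4`), and a positive sequence
`(α_m)` decreasing to `0`, there exists an even positive integer `q`
(depending only on `φ`) such that for `φ_m = Ψ_m ∘ φ` with
`Ψ_m(x) = x/(1+α_m x^q)`:
(a) all derivatives of `φ_m` of orders `1,…,4` are bounded on `ℝ`, and
(b) there is `B̃ ∈ (0,∞)`, independent of `m`, with
`|φ_m^{(j)}(x)| ≤ B̃(1+|x|^{j(m₁−1)})` for all `x`, `m` and `j ∈ {1,2,3,4}`. -/
theorem stmt2 (φ : ℝ → ℝ) (hφ : ContDiff ℝ 4 φ) (hφ0 : ∀ x : ℝ, 0 ≤ φ x)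
    (A B R m₀ : ℝ) (hA : 0 < A) (hB : 0 < B) (hR : 0 < R) (hm₀ : 0 < m₀)
    (m₁ : ℕ) (hm₁ : 4 ≤ m₁)
    (hgrow : ∀ x : ℝ, R ≤ |x| → A * |x| ^ m₀ ≤ φ x)
    (hder : ∀ j : ℕ, j ≤ 4 → ∀ x : ℝ,
      |iteratedDeriv j φ x| ≤ B * (1 + |x| ^ (m₁ - j)))
    (α : ℕ → ℝ) (hα : ∀ m, 0 < α m) (hαmono : Antitone α)
    (hα0 : Tendsto α atTop (nhds 0)) :
    ∃ q : ℕ, Even q ∧ 0 < q ∧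
      (∀ m : ℕ, ∀ j : ℕ, 1 ≤ j → j ≤ 4 → ∃ C : ℝ, ∀ x : ℝ,
        |iteratedDeriv j (fun t => φ t / (1 + α m * φ t ^ q)) x| ≤ C) ∧
      ∃ Btil : ℝ, 0 < Btil ∧ ∀ m : ℕ, ∀ j : ℕ, 1 ≤ j → j ≤ 4 → ∀ x : ℝ,
        |iteratedDeriv j (fun t => φ t / (1 + α m * φ t ^ q)) x|
          ≤ Btil * (1 + |x| ^ (j * (m₁ - 1))) := by
  classical
  set k : ℕ := ⌈(4*(m₁:ℝ))/m₀⌉₊ with hk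
  have hq_growth : (4*(m₁:ℝ)) ≤ m₀*(2*(k:ℝ)+4) := by
    have h := Nat.le_ceil ((4*(m₁:ℝ))/m₀)
    have h2 : ((⌈(4*(m₁:ℝ))/m₀⌉₊ : ℕ):ℝ) ≤ 2*(k:ℝ)+4 := by rw [hk]; push_cast; linarith
    have h3 := (div_le_iff₀ hm₀).1 (le_trans h h2)
    linarith
  -- the master pointwise estimate
  have key : ∀ (m : ℕ) (j : ℕ), 1 ≤ j → j ≤ 4 → ∀ (x : ℝ) (CC : ℝ), 0 ≤ CC →
      (∀ i : ℕ, 1 ≤ i → i ≤ j → |iteratedDeriv i (Stmt2Aux.psi (α m) k) (φ x)| ≤ CC) →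
      |iteratedDeriv j (fun t => φ t / (1 + α m * φ t ^ (2*k+4))) x|
        ≤ ((Nat.factorial j : ℕ) : ℝ) * CC * (max 1 (2*B*(1+|x|^(m₁-1))))^j := by
    intro m j hj1 hj4 x CC hCC0 hCC
    have ha := hα m
    set a := α m with hadef
    set c : ℝ := Stmt2Aux.psi a k (φ x) with hc
    set g : ℝ → ℝ := fun y => Stmt2Aux.psi a k y - c with hg
    have hgφ : (g ∘ φ) = fun t => (φ t / (1 + a * φ t ^ (2*k+4))) - c := rfl
    have h1 : iteratedDeriv j (fun t => φ t / (1 + a * φ t ^ (2*k+4))) x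
        = iteratedDeriv j (g ∘ φ) x := by
      rw [hgφ, Stmt2Aux.shift_iteratedDeriv _ _ j hj1]
    have h2 : |iteratedDeriv j (g ∘ φ) x| = ‖iteratedFDeriv ℝ j (g ∘ φ) x‖ := by
      rw [norm_iteratedFDeriv_eq_norm_iteratedDeriv, Real.norm_eq_abs]
    rw [h1, h2]
    refine norm_iteratedFDeriv_comp_le (N := 4)
      ((Stmt2Aux.psi_contDiff a k ha.le).sub contDiff_const) hφ (by exact_mod_cast hj4) x
      ?_ ?_
    · intro i hi
      rcases Nat.eq_zero_or_pos i with rfl | hi1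
      · rw [norm_iteratedFDeriv_zero]
        have hz : Stmt2Aux.psi a k (φ x) - c = 0 := sub_self _
        rw [hz, norm_zero]
        exact hCC0
      · rw [norm_iteratedFDeriv_eq_norm_iteratedDeriv, Real.norm_eq_abs]
        have hgi : iteratedDeriv i g = iteratedDeriv i (Stmt2Aux.psi a k) :=
          Stmt2Aux.shift_iteratedDeriv (Stmt2Aux.psi a k) c i hi1
        rw [hgi]
        exact hCC i hi1 hi
    · intro i hi1 hij
      rw [norm_iteratedFDeriv_eq_norm_iteratedDeriv, Real.norm_eq_abs]
      have hd := hder i (le_trans hij hj4) x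
      have hx0 : (0:ℝ) ≤ |x| := abs_nonneg x
      have hmono : |x|^(m₁-i) ≤ 1 + |x|^(m₁-1) := by
        rcases le_total |x| 1 with h|h
        · have h1 := pow_le_one₀ hx0 h (n := m₁ - i)
          nlinarith [pow_nonneg hx0 (m₁-1)]
        · have h1 : |x|^(m₁-i) ≤ |x|^(m₁-1) :=
            pow_le_pow_right₀ h (by omega : m₁ - i ≤ m₁ - 1)
          nlinarith [pow_nonneg hx0 (m₁-1)]
      have hstep : B*(1+|x|^(m₁-i)) ≤ max 1 (2*B*(1+|x|^(m₁-1))) := by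
        refine le_trans ?_ (le_max_right _ _)
        nlinarith [pow_nonneg hx0 (m₁-1), pow_nonneg hx0 (m₁-i)]
      calc |iteratedDeriv i φ x| ≤ max 1 (2*B*(1+|x|^(m₁-1))) := le_trans hd hstep
        _ ≤ (max 1 (2*B*(1+|x|^(m₁-1))))^i := le_self_pow₀ (le_max_left _ _) (by omega)
  refine ⟨2*k+4, ⟨k+2, by ring⟩, by omega, ?_, ?_⟩
  · -- part (a): boundedness for each m, j
    intro m j hj1 hj4
    have ha := hα m
    set a := α m with hadef
    set r0 : ℝ := (1/A) ^ (m₀⁻¹) with hr0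
    set R₂ : ℝ := max R (max 1 r0) with hR₂
    have hφ_big : ∀ x : ℝ, R₂ ≤ |x| → 1 ≤ φ x := by
      intro x hx
      have h1 : R ≤ |x| := le_trans (le_max_left _ _) hx
      have hg := hgrow x h1
      have h2 : r0 ≤ |x| := le_trans (le_trans (le_max_right _ _) (le_max_right _ _)) hx
      have hr0nn : (0:ℝ) ≤ r0 := Real.rpow_nonneg (by positivity) _
      have h3 : r0 ^ m₀ ≤ |x| ^ m₀ := Real.rpow_le_rpow hr0nn h2 hm₀.le
      have h4 : r0 ^ m₀ = 1/A := by
        rw [hr0, ← Real.rpow_mul (by positivity), inv_mul_cancel₀ hm₀.ne', Real.rpow_one]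
      rw [h4] at h3
      have h5 : (1:ℝ) ≤ A * |x|^m₀ := by
        have := mul_le_mul_of_nonneg_left h3 hA.le
        rw [mul_one_div, div_self hA.ne'] at this
        linarith
      linarith
    set C₁ : ℝ := 384 * (Stmt2Aux.Cq k / a) * (1+2*B)^4 * (2 / A^(2*k+4)) with hC₁
    have hout : ∀ x : ℝ, R₂ ≤ |x| →
        |iteratedDeriv j (fun t => φ t / (1 + a * φ t ^ (2*k+4))) x| ≤ C₁ := by
      intro x hx
      have hφ1 := hφ_big x hx
      have hφ0x : (0:ℝ) < φ x := by linarith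
      have hgrw := hgrow x (le_trans (le_max_left _ _) hx)
      have hx1 : (1:ℝ) ≤ |x| := le_trans (le_trans (le_max_left _ _) (le_max_right _ _)) hx
      have hCq := Stmt2Aux.Cq_pos k
      have hCCd0 : (0:ℝ) ≤ (Stmt2Aux.Cq k / a) / (φ x)^(2*k+4) :=
        div_nonneg (div_nonneg hCq.le ha.le) (pow_nonneg (hφ0 x) _)
      have happ := key m j hj1 hj4 x ((Stmt2Aux.Cq k / a) / (φ x)^(2*k+4)) hCCd0
        (fun i hi1 hij => Stmt2Aux.bound_d a k ha i hi1 (le_trans hij hj4) (φ x) hφ1)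
      refine le_trans happ ?_
      refine le_trans (Stmt2Aux.arith_b B _ (|x|^(m₁-1)) hB hCCd0
        (pow_nonneg (abs_nonneg x) _) j hj4) ?_
      -- now bound 384 * CCd * (1+2B)^4 * (1+s^j) by C₁
      have h5 : 1 + (|x|^(m₁-1))^j ≤ 2*|x|^(4*m₁) := by
        have e1 : (|x|^(m₁-1))^j = |x|^((m₁-1)*j) := (pow_mul _ _ _).symm
        have e0 : (m₁-1)*j ≤ 4*m₁ := by
          calc (m₁-1)*j ≤ (m₁-1)*4 := Nat.mul_le_mul_left _ hj4
            _ ≤ 4*m₁ := by omega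
        have e2 : |x|^((m₁-1)*j) ≤ |x|^(4*m₁) := pow_le_pow_right₀ hx1 e0
        have e3 : (1:ℝ) ≤ |x|^(4*m₁) := one_le_pow₀ hx1
        rw [e1]
        linarith
      have hbase : A^(2*k+4) * |x|^(4*m₁) ≤ (φ x)^(2*k+4) := by
        have p1 : (A*|x|^m₀)^(2*k+4) ≤ (φ x)^(2*k+4) :=
          pow_le_pow_left₀ (by positivity) hgrw _
        have p2 : (A*|x|^m₀)^(2*k+4) = A^(2*k+4) * (|x|^m₀)^(2*k+4) := mul_pow _ _ _
        have p3 : |x|^(4*m₁) ≤ (|x|^m₀)^(2*k+4) := by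
          rw [← Real.rpow_natCast (|x|^m₀) (2*k+4), ← Real.rpow_natCast |x| (4*m₁),
            ← Real.rpow_mul (abs_nonneg x)]
          refine Real.rpow_le_rpow_of_exponent_le hx1 ?_
          push_cast
          linarith
        calc A^(2*k+4) * |x|^(4*m₁) ≤ A^(2*k+4) * (|x|^m₀)^(2*k+4) :=
              mul_le_mul_of_nonneg_left p3 (pow_nonneg hA.le _)
          _ = (A*|x|^m₀)^(2*k+4) := p2.symm
          _ ≤ (φ x)^(2*k+4) := p1
      have hφQ : (0:ℝ) < (φ x)^(2*k+4) := pow_pos hφ0x _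
      have hxQ : (0:ℝ) < |x|^(4*m₁) := pow_pos (by linarith) _
      have hAQ : (0:ℝ) < A^(2*k+4) := pow_pos hA _
      have h6 : (Stmt2Aux.Cq k / a) / (φ x)^(2*k+4) * (2*|x|^(4*m₁))
          ≤ (Stmt2Aux.Cq k / a) * (2 / A^(2*k+4)) := by
        have c1 : (Stmt2Aux.Cq k / a) / (φ x)^(2*k+4) * (2*|x|^(4*m₁))
            = 2*(Stmt2Aux.Cq k / a) * (|x|^(4*m₁) / (φ x)^(2*k+4)) := by ring
        have c2 : |x|^(4*m₁) / (φ x)^(2*k+4) ≤ |x|^(4*m₁) / (A^(2*k+4) * |x|^(4*m₁)) := by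
          gcongr
        have c3 : |x|^(4*m₁) / (A^(2*k+4) * |x|^(4*m₁)) = 1/A^(2*k+4) := by
          rw [mul_comm (A^(2*k+4)) (|x|^(4*m₁)), ← div_div, div_self hxQ.ne']
        have c4 : (0:ℝ) ≤ 2*(Stmt2Aux.Cq k / a) := by positivity
        calc (Stmt2Aux.Cq k / a) / (φ x)^(2*k+4) * (2*|x|^(4*m₁))
            = 2*(Stmt2Aux.Cq k / a) * (|x|^(4*m₁) / (φ x)^(2*k+4)) := c1
          _ ≤ 2*(Stmt2Aux.Cq k / a) * (1/A^(2*k+4)) := by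
              refine mul_le_mul_of_nonneg_left (le_trans c2 (le_of_eq c3)) c4
          _ = (Stmt2Aux.Cq k / a) * (2 / A^(2*k+4)) := by ring
      have hfin : 384 * ((Stmt2Aux.Cq k / a) / (φ x)^(2*k+4)) * (1+2*B)^4
            * (1 + (|x|^(m₁-1))^j) ≤ C₁ := by
        rw [hC₁]
        have d1 : (0:ℝ) ≤ 384 * (1+2*B)^4 := by positivity
        have d2 : ((Stmt2Aux.Cq k / a) / (φ x)^(2*k+4)) * (1 + (|x|^(m₁-1))^j)
            ≤ (Stmt2Aux.Cq k / a) * (2 / A^(2*k+4)) := by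
          refine le_trans (mul_le_mul_of_nonneg_left h5 hCCd0) h6
        calc 384 * ((Stmt2Aux.Cq k / a) / (φ x)^(2*k+4)) * (1+2*B)^4 * (1 + (|x|^(m₁-1))^j)
            = (384 * (1+2*B)^4) * (((Stmt2Aux.Cq k / a) / (φ x)^(2*k+4))
              * (1 + (|x|^(m₁-1))^j)) := by ring
          _ ≤ (384 * (1+2*B)^4) * ((Stmt2Aux.Cq k / a) * (2 / A^(2*k+4))) :=
              mul_le_mul_of_nonneg_left d2 d1
          _ = 384 * (Stmt2Aux.Cq k / a) * (1+2*B)^4 * (2 / A^(2*k+4)) := by ring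
      exact hfin
    have hc4 : ContDiff ℝ 4 (fun t => φ t / (1 + a * φ t ^ (2*k+4))) := by
      have heq : (Stmt2Aux.psi a k ∘ φ) = fun t => φ t / (1 + a * φ t ^ (2*k+4)) := rfl
      rw [← heq]
      exact (Stmt2Aux.psi_contDiff a k ha.le).comp hφ
    have hcont : Continuous (iteratedDeriv j (fun t => φ t / (1 + a * φ t ^ (2*k+4)))) :=
      hc4.continuous_iteratedDeriv j (by exact_mod_cast hj4)
    obtain ⟨C₂, hC₂⟩ := (isCompact_Icc (a := -R₂) (b := R₂)).exists_bound_of_continuousOn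
      hcont.continuousOn
    refine ⟨max C₁ C₂, fun x => ?_⟩
    rcases le_total |x| R₂ with h|h
    · have hx : x ∈ Set.Icc (-R₂) R₂ := Set.mem_Icc.2 (abs_le.1 h)
      have := hC₂ x hx
      rw [Real.norm_eq_abs] at this
      exact le_trans this (le_max_right _ _)
    · exact le_trans (hout x h) (le_max_left _ _)
  · -- part (b): uniform polynomial bound
    have hCq := Stmt2Aux.Cq_pos k
    have hα0 := hα 0
    refine ⟨384 * (Stmt2Aux.Cq k * (1 + α 0)) * (1+2*B)^4, ?_, ?_⟩
    · exact mul_pos (mul_pos (by norm_num) (mul_pos hCq (by linarith)))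
        (pow_pos (by linarith) 4)
    intro m j hj1 hj4 x
    have ha := hα m
    have hαm : α m ≤ α 0 := hαmono (Nat.zero_le m)
    have hCC0 : (0:ℝ) ≤ Stmt2Aux.Cq k * (1 + α 0) := by
      have : (0:ℝ) < 1 + α 0 := by linarith
      positivity
    have happ := key m j hj1 hj4 x (Stmt2Aux.Cq k * (1 + α 0)) hCC0
      (fun i hi1 hij => le_trans
        (Stmt2Aux.bound_u (α m) k ha i hi1 (le_trans hij hj4) (φ x))
        (by nlinarith))
    refine le_trans happ ?_
    refine le_trans (Stmt2Aux.arith_b B _ (|x|^(m₁-1)) hB hCC0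
      (pow_nonneg (abs_nonneg x) _) j hj4) ?_
    have e1 : (|x|^(m₁-1))^j = |x|^(j*(m₁-1)) := by
      rw [← pow_mul, Nat.mul_comm]
    rw [e1]
end
end

section
/- Let φ : ℝ → ℝ be twice continuously differentiable such that |φ''(x)| ≤ a(1+|x|^{b}) for all x ∈ ℝ, for some constants a ∈ (0,∞), b ∈ [0,∞). Then for every p ∈ [1,∞), lim_{n→∞} ∫_U ( ∫₀¹ |φ'((P_n x)(ξ)) − φ'(x(ξ))|² dξ )^{p/2} dμ(x) = 0; that is, the maps x ↦ φ'∘(P_n x) converge to x ↦ φ'∘x in L^p(μ; L²((0,1))). -/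
open MeasureTheory Set Filter

/-- Lebesgue measure restricted to `(0,1)`. -/
noncomputable def leb01 : Measure ℝ := volume.restrict (Set.Ioo (0:ℝ) 1)

instance : IsProbabilityMeasure leb01 :=
  ⟨by rw [leb01, Measure.restrict_apply_univ, Real.volume_Ioo]; norm_num⟩

namespace Stmt6Aux

open ENNReal

lemma mul_le_sq_add_sq (x y : ℝ≥0∞) : x * y ≤ x * x + y * y := by
  rcases le_total x y with h | h
  · exact le_add_left (mul_le_mul_left h y)
  · exact le_add_right (mul_le_mul_right h x)

lemma rpow_self_mul_self (x : ℝ≥0∞) {m : ℝ} (hm : 0 ≤ m) :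
    x ^ m * x ^ m = x ^ (2 * m) := by
  rw [two_mul, ENNReal.rpow_add_of_nonneg _ _ hm hm]

lemma young (w d c : ℝ≥0∞) (hc0 : c ≠ 0) (hct : c ≠ ∞) :
    w * d ≤ c * (w * w) + c⁻¹ * (d * d) := by
  have h1 : w * d = (c ^ (1/2 : ℝ) * w) * ((c⁻¹) ^ (1/2 : ℝ) * d) := by
    rw [mul_mul_mul_comm, ← ENNReal.mul_rpow_of_nonneg _ _ (by norm_num : (0:ℝ) ≤ 1/2),
      ENNReal.mul_inv_cancel hc0 hct, ENNReal.one_rpow, one_mul]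
  have h2 : c ^ (1/2 : ℝ) * w * (c ^ (1/2 : ℝ) * w) = c * (w * w) := by
    rw [mul_mul_mul_comm, rpow_self_mul_self c (by norm_num : (0:ℝ) ≤ 1/2)]
    norm_num
  have h3 : (c⁻¹) ^ (1/2 : ℝ) * d * ((c⁻¹) ^ (1/2 : ℝ) * d) = c⁻¹ * (d * d) := by
    rw [mul_mul_mul_comm, rpow_self_mul_self c⁻¹ (by norm_num : (0:ℝ) ≤ 1/2)]
    norm_num
  calc w * d = _ := h1
    _ ≤ _ := mul_le_sq_add_sq _ _
    _ = _ := by rw [h2, h3]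

lemma eta (B η : ℝ≥0∞) (hη0 : η ≠ 0) (hηt : η ≠ ∞) {q : ℝ} (hq : 0 ≤ q) :
    B ^ q ≤ η ^ q + η⁻¹ * B ^ (q + 1) := by
  rcases eq_or_ne B ∞ with rfl | hBt
  · have : (∞ : ℝ≥0∞) ^ (q + 1) = ∞ := ENNReal.top_rpow_of_pos (by linarith)
    rw [this, ENNReal.mul_top (by simpa using hηt)]
    exact le_add_left le_top
  rcases le_total B η with h | h
  · exact le_add_right (ENNReal.rpow_le_rpow h hq)
  · have hB0 : B ≠ 0 := fun h0 => hη0 (le_antisymm (h0 ▸ h) zero_le)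
    have : B ^ (q + 1) = B ^ q * B := by
      rw [ENNReal.rpow_add _ _ hB0 hBt, ENNReal.rpow_one]
    rw [this]
    calc B ^ q = η⁻¹ * η * B ^ q := by rw [ENNReal.inv_mul_cancel hη0 hηt, one_mul]
      _ = η⁻¹ * (B ^ q * η) := by ring
      _ ≤ η⁻¹ * (B ^ q * B) := mul_le_mul_right (mul_le_mul_right h _) _
      _ ≤ η ^ q + η⁻¹ * (B ^ q * B) := le_add_left le_rfl

lemma exists_small (B δ : ℝ≥0∞) (hB : B ≠ ∞) (hδ : δ ≠ 0) :
    ∃ t : ℝ≥0∞, t ≠ 0 ∧ t ≠ ∞ ∧ B * t ≤ δ := by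
  refine ⟨min (δ / (B + 1)) 1, ?_, ?_, ?_⟩
  · have : 0 < δ / (B + 1) := ENNReal.div_pos hδ (by simp [hB])
    have h1 : (0:ℝ≥0∞) < min (δ / (B + 1)) 1 := lt_min this one_pos
    exact h1.ne'
  · exact ne_top_of_le_ne_top one_ne_top (min_le_right _ _)
  · calc B * min (δ / (B + 1)) 1 ≤ (B + 1) * (δ / (B + 1)) :=
        mul_le_mul' (le_self_add) (min_le_left _ _)
    _ ≤ δ := ENNReal.mul_div_le

lemma jensen (f : ℝ → ℝ≥0∞) (hf : AEMeasurable f leb01) {m : ℝ} (hm : 1 < m) :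
    (∫⁻ ξ, f ξ ∂leb01) ^ m ≤ ∫⁻ ξ, f ξ ^ m ∂leb01 := by
  have hm0 : (0:ℝ) < m := by linarith
  have hpq : m.HolderConjugate (Real.conjExponent m) := Real.HolderConjugate.conjExponent hm
  have h := ENNReal.lintegral_mul_le_Lp_mul_Lq leb01 hpq hf aemeasurable_const
    (g := fun _ => (1:ℝ≥0∞))
  simp only [Pi.mul_apply, mul_one, ENNReal.one_rpow, lintegral_const, measure_univ, one_mul,
    ENNReal.one_rpow] at h
  calc (∫⁻ ξ, f ξ ∂leb01) ^ m ≤ ((∫⁻ ξ, f ξ ^ m ∂leb01) ^ (1/m)) ^ m :=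
        ENNReal.rpow_le_rpow h hm0.le
    _ = ∫⁻ ξ, f ξ ^ m ∂leb01 := by
        rw [← ENNReal.rpow_mul, one_div, inv_mul_cancel₀ hm0.ne', ENNReal.rpow_one]

lemma abs_min_sub_min (a b c : ℝ) : |min a c - min b c| ≤ |a - b| := by
  rw [abs_sub_le_iff]
  constructor
  · rcases le_total b c with h | h
    · rw [min_eq_left h]
      exact le_trans (sub_le_sub_right (min_le_left a c) b) (le_abs_self _)
    · rw [min_eq_right h]
      exact le_trans (by linarith [min_le_right a c] : min a c - c ≤ 0) (abs_nonneg _)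
  · rcases le_total a c with h | h
    · rw [min_eq_left h]
      exact le_trans (sub_le_sub_right (min_le_left b c) a)
        (by rw [abs_sub_comm]; exact le_abs_self _)
    · rw [min_eq_right h]
      exact le_trans (by linarith [min_le_right b c] : min b c - c ≤ 0) (abs_nonneg _)

lemma min_rpow_lip {r : ℝ} (hr : 1 < r) (j : ℕ) (s t : ℝ) (hs : 0 ≤ s) (ht : 0 ≤ t) :
    min t j ^ r ≤ min s j ^ r + r * (j : ℝ) ^ (r - 1) * |t - s| := by
  set L : ℝ := r * (j : ℝ) ^ (r - 1) with hL
  have hL0 : 0 ≤ L := mul_nonneg (by linarith) (Real.rpow_nonneg (Nat.cast_nonneg j) _)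
  have hjd : ∀ x : ℝ, DifferentiableAt ℝ (fun u : ℝ => u ^ r) x := fun x =>
    (Real.hasDerivAt_rpow_const (Or.inr hr.le)).differentiableAt
  have hderiv : ∀ x : ℝ, deriv (fun u : ℝ => u ^ r) x = r * x ^ (r - 1) := fun x =>
    (Real.hasDerivAt_rpow_const (Or.inr hr.le)).deriv
  have core : ∀ x ∈ Icc (0:ℝ) j, ∀ y ∈ Icc (0:ℝ) j,
      |y ^ r - x ^ r| ≤ L * |y - x| := by
    intro x hx y hy
    have := (convex_Icc (0:ℝ) j).norm_image_sub_le_of_norm_deriv_le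
      (f := fun u : ℝ => u ^ r) (C := L) (fun u _ => hjd u) ?_ hx hy
    · simpa [Real.norm_eq_abs] using this
    · intro u hu
      rw [hderiv, Real.norm_eq_abs, abs_mul, abs_of_nonneg (by linarith : (0:ℝ) ≤ r),
        abs_of_nonneg (Real.rpow_nonneg hu.1 _)]
      exact mul_le_mul_of_nonneg_left
        (Real.rpow_le_rpow hu.1 hu.2 (by linarith)) (by linarith)
  have hmem : ∀ u : ℝ, 0 ≤ u → min u (j:ℝ) ∈ Icc (0:ℝ) j :=
    fun u hu => ⟨le_min hu (Nat.cast_nonneg j), min_le_right _ _⟩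
  calc min t (j:ℝ) ^ r ≤ min s (j:ℝ) ^ r + |min t (j:ℝ) ^ r - min s (j:ℝ) ^ r| := by
        have := le_abs_self (min t (j:ℝ) ^ r - min s (j:ℝ) ^ r); linarith
    _ ≤ min s (j:ℝ) ^ r + L * |min t (j:ℝ) - min s (j:ℝ)| := by
        have := core _ (hmem s hs) _ (hmem t ht); linarith
    _ ≤ min s (j:ℝ) ^ r + L * |t - s| := by
        have := abs_min_sub_min t s (j:ℝ)
        nlinarith [abs_nonneg (t - s)]

/-- Truncated moment functional on `L²((0,1))`. -/
noncomputable def Fj (r : ℝ) (j : ℕ) (y : Lp ℝ 2 leb01) : ℝ≥0∞ :=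
  ∫⁻ ξ, ENNReal.ofReal (min |y ξ| j ^ r) ∂leb01

lemma Fj_meas_integrand (r : ℝ) (j : ℕ) :
    Measurable fun t : ℝ => ENNReal.ofReal (min |t| (j:ℝ) ^ r) :=
  (((continuous_abs.min continuous_const).measurable).pow_const r).ennreal_ofReal

lemma Fj_integrand_aemeas (r : ℝ) (j : ℕ) (y : Lp ℝ 2 leb01) :
    AEMeasurable (fun ξ => ENNReal.ofReal (min |y ξ| (j:ℝ) ^ r)) leb01 :=
  (Fj_meas_integrand r j).comp_aemeasurable (Lp.aestronglyMeasurable y).aemeasurable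

lemma Fj_ne_top {r : ℝ} (hr : 1 < r) (j : ℕ) (y : Lp ℝ 2 leb01) : Fj r j y ≠ ∞ := by
  have : Fj r j y ≤ ∫⁻ _ξ, ENNReal.ofReal ((j:ℝ) ^ r) ∂leb01 := by
    refine lintegral_mono fun ξ => ENNReal.ofReal_le_ofReal ?_
    exact Real.rpow_le_rpow (le_min (abs_nonneg _) (Nat.cast_nonneg j))
      (min_le_right _ _) (by linarith)
  rw [lintegral_const, measure_univ, mul_one] at this
  exact ne_top_of_le_ne_top ENNReal.ofReal_ne_top this

lemma Fj_estimate {r : ℝ} (hr : 1 < r) (j : ℕ) (y z : Lp ℝ 2 leb01) :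
    Fj r j y ≤ Fj r j z +
      ENNReal.ofReal (r * (j : ℝ) ^ (r - 1)) * ENNReal.ofReal ‖y - z‖ := by
  set L : ℝ := r * (j : ℝ) ^ (r - 1) with hLdef
  have hL0 : 0 ≤ L := mul_nonneg (by linarith) (Real.rpow_nonneg (Nat.cast_nonneg j) _)
  have step1 : Fj r j y ≤
      ∫⁻ ξ, (ENNReal.ofReal (min |z ξ| j ^ r) + ENNReal.ofReal (L * |y ξ - z ξ|)) ∂leb01 := by
    refine lintegral_mono fun ξ => ?_
    rw [← ENNReal.ofReal_add (Real.rpow_nonneg (le_min (abs_nonneg _) (Nat.cast_nonneg j)) _)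
      (mul_nonneg hL0 (abs_nonneg _))]
    refine ENNReal.ofReal_le_ofReal ?_
    have h1 := min_rpow_lip hr j |z ξ| |y ξ| (abs_nonneg _) (abs_nonneg _)
    have h2 : |(|y ξ| - |z ξ|)| ≤ |y ξ - z ξ| := abs_abs_sub_abs_le_abs_sub _ _
    rw [← hLdef] at h1
    have h3 := mul_le_mul_of_nonneg_left h2 hL0
    linarith
  have hmz : AEMeasurable (fun ξ => ENNReal.ofReal (min |z ξ| (j:ℝ) ^ r)) leb01 :=
    Fj_integrand_aemeas r j z
  rw [lintegral_add_left' hmz] at step1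
  refine le_trans step1 (add_le_add_right ?_ _)
  have : ∀ ξ : ℝ, ENNReal.ofReal (L * |y ξ - z ξ|) =
      ENNReal.ofReal L * ENNReal.ofReal |y ξ - z ξ| := fun ξ => ENNReal.ofReal_mul hL0
  simp_rw [this]
  rw [lintegral_const_mul' _ _ ENNReal.ofReal_ne_top]
  refine mul_le_mul_right ?_ _
  have e1 : ∫⁻ ξ, ENNReal.ofReal |y ξ - z ξ| ∂leb01 = eLpNorm (⇑y - ⇑z) 1 leb01 := by
    rw [eLpNorm_one_eq_lintegral_enorm]
    refine lintegral_congr fun ξ => ?_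
    rw [← ofReal_norm_eq_enorm, Real.norm_eq_abs]; rfl
  rw [e1, ← eLpNorm_congr_ae (Lp.coeFn_sub y z)]
  calc eLpNorm (⇑(y - z)) 1 leb01 ≤ eLpNorm (⇑(y - z)) 2 leb01 :=
        eLpNorm_le_eLpNorm_of_exponent_le (by norm_num) (Lp.aestronglyMeasurable _)
    _ = ENNReal.ofReal ‖y - z‖ := by
        rw [Lp.norm_def, ENNReal.ofReal_toReal (Lp.eLpNorm_ne_top _)]

lemma Fj_continuous {r : ℝ} (hr : 1 < r) (j : ℕ) : Continuous (Fj r j) := by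
  set L : ℝ := r * (j : ℝ) ^ (r - 1) with hLdef
  have hL0 : 0 ≤ L := mul_nonneg (by linarith) (Real.rpow_nonneg (Nat.cast_nonneg j) _)
  refine continuous_iff_continuousAt.mpr fun z => ?_
  rw [ContinuousAt, ENNReal.tendsto_nhds (Fj_ne_top hr j z)]
  intro ε hε
  obtain ⟨δ, hδ0, hδε⟩ : ∃ δ : ℝ, 0 < δ ∧ ENNReal.ofReal (L * δ) ≤ ε := by
    rcases eq_or_ne ε ∞ with rfl | hεt
    · exact ⟨1, one_pos, le_top⟩
    · refine ⟨ε.toReal / (L + 1), div_pos (ENNReal.toReal_pos hε.ne' hεt) (by linarith), ?_⟩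
      calc ENNReal.ofReal (L * (ε.toReal / (L + 1))) ≤ ENNReal.ofReal ε.toReal := by
            refine ENNReal.ofReal_le_ofReal ?_
            rw [mul_div_assoc']
            rw [div_le_iff₀ (by linarith : (0:ℝ) < L + 1)]
            nlinarith [ENNReal.toReal_nonneg (a := ε)]
        _ = ε := ENNReal.ofReal_toReal hεt
  filter_upwards [Metric.ball_mem_nhds z hδ0] with y hy
  rw [Metric.mem_ball, dist_eq_norm] at hy
  have hnorm : ENNReal.ofReal L * ENNReal.ofReal ‖y - z‖ ≤ ENNReal.ofReal (L * δ) := by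
    rw [← ENNReal.ofReal_mul hL0]
    exact ENNReal.ofReal_le_ofReal (mul_le_mul_of_nonneg_left hy.le hL0)
  constructor
  · rw [tsub_le_iff_right]
    calc Fj r j z ≤ Fj r j y + ENNReal.ofReal L * ENNReal.ofReal ‖z - y‖ :=
          Fj_estimate hr j z y
      _ ≤ Fj r j y + ENNReal.ofReal (L * δ) := by
          rw [norm_sub_rev]; exact add_le_add_right hnorm _
      _ ≤ Fj r j y + ε := add_le_add_right hδε _
  · calc Fj r j y ≤ Fj r j z + ENNReal.ofReal L * ENNReal.ofReal ‖y - z‖ :=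
          Fj_estimate hr j y z
      _ ≤ Fj r j z + ENNReal.ofReal (L * δ) := add_le_add_right hnorm _
      _ ≤ Fj r j z + ε := add_le_add_right hδε _

lemma theta_measurable [MeasurableSpace (Lp ℝ 2 leb01)] [BorelSpace (Lp ℝ 2 leb01)]
    {r : ℝ} (hr : 1 < r) :
    Measurable fun y : Lp ℝ 2 leb01 => ∫⁻ ξ, ENNReal.ofReal (|y ξ| ^ r) ∂leb01 := by
  have key : ∀ y : Lp ℝ 2 leb01,
      ∫⁻ ξ, ENNReal.ofReal (|y ξ| ^ r) ∂leb01 = ⨆ j : ℕ, Fj r j y := by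
    intro y
    have hptws : ∀ ξ : ℝ, ENNReal.ofReal (|y ξ| ^ r) =
        ⨆ j : ℕ, ENNReal.ofReal (min |y ξ| j ^ r) := by
      intro ξ
      refine le_antisymm ?_ (iSup_le fun j => ENNReal.ofReal_le_ofReal
        (Real.rpow_le_rpow (le_min (abs_nonneg _) (Nat.cast_nonneg j))
          (min_le_left _ _) (by linarith)))
      obtain ⟨j, hj⟩ := exists_nat_ge |y ξ|
      have : min |y ξ| (j:ℝ) = |y ξ| := min_eq_left hj
      exact le_iSup_of_le j (by rw [this])
    simp_rw [hptws]
    rw [lintegral_iSup' (μ := leb01)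
      (f := fun (j : ℕ) (ξ : ℝ) => ENNReal.ofReal (min |y ξ| (j:ℝ) ^ r))
      (fun j => Fj_integrand_aemeas r j y)
      (Filter.Eventually.of_forall fun ξ => fun j₁ j₂ h =>
        ENNReal.ofReal_le_ofReal (Real.rpow_le_rpow
          (le_min (abs_nonneg _) (Nat.cast_nonneg j₁))
          (min_le_min le_rfl (Nat.cast_le.mpr h)) (by linarith)))]
    rfl
  simp_rw [key]
  exact Measurable.iSup fun j => (Fj_continuous hr j).measurable

lemma rpow_le_one_add {x e r : ℝ} (hx : 0 ≤ x) (he : 0 ≤ e) (her : e ≤ r) :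
    x ^ e ≤ 1 + x ^ r := by
  rcases le_total x 1 with h | h
  · exact le_trans (Real.rpow_le_one hx h he) (by nlinarith [Real.rpow_nonneg hx r])
  · exact le_trans (Real.rpow_le_rpow_of_exponent_le h her)
      (by nlinarith [Real.rpow_nonneg hx r])

lemma deriv_bound (φ : ℝ → ℝ) (hφ : ContDiff ℝ 2 φ) (a b : ℝ) (ha : 0 < a) (hb : 0 ≤ b)
    (hgrow : ∀ x : ℝ, |deriv (deriv φ) x| ≤ a * (1 + |x| ^ b)) (s t : ℝ) :
    |deriv φ s - deriv φ t| ≤ a * (1 + |s| ^ b + |t| ^ b) * |s - t| := by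
  have h2 : ContDiff ℝ (1 + 1) φ := by
    exact (by exact_mod_cast hφ : ContDiff ℝ 2 φ)
  have hd : Differentiable ℝ (deriv φ) := by
    have := (contDiff_succ_iff_deriv.mp h2).2.2
    exact this.differentiable one_ne_zero
  set C : ℝ := a * (1 + |s| ^ b + |t| ^ b) with hC
  have hSb : (0:ℝ) ≤ |s| ^ b := Real.rpow_nonneg (abs_nonneg _) _
  have hTb : (0:ℝ) ≤ |t| ^ b := Real.rpow_nonneg (abs_nonneg _) _
  have bound : ∀ θ ∈ Icc (min s t) (max s t), ‖deriv (deriv φ) θ‖ ≤ C := by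
    intro θ hθ
    have habs : |θ| ≤ max |s| |t| := by
      rw [abs_le]
      constructor
      · have h0 : min s t ≤ θ := hθ.1
        have h1 : -(max |s| |t|) ≤ min s t := by
          rcases min_choice s t with h | h <;> rw [h] <;>
            nlinarith [neg_abs_le s, neg_abs_le t, le_max_left |s| |t|, le_max_right |s| |t|]
        linarith
      · have h0 : θ ≤ max s t := hθ.2
        have h1 : max s t ≤ max |s| |t| := by
          rcases max_choice s t with h | h <;> rw [h] <;>
            nlinarith [le_abs_self s, le_abs_self t, le_max_left |s| |t|, le_max_right |s| |t|]
        linarith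
    have hθb : |θ| ^ b ≤ |s| ^ b + |t| ^ b := by
      have h1 : |θ| ^ b ≤ (max |s| |t|) ^ b :=
        Real.rpow_le_rpow (abs_nonneg _) habs hb
      rcases max_choice |s| |t| with h | h <;> rw [h] at h1 <;> linarith
    rw [Real.norm_eq_abs]
    calc |deriv (deriv φ) θ| ≤ a * (1 + |θ| ^ b) := hgrow θ
      _ ≤ C := by rw [hC]; nlinarith
  have hst : s ∈ Icc (min s t) (max s t) := ⟨min_le_left _ _, le_max_left _ _⟩
  have hts : t ∈ Icc (min s t) (max s t) := ⟨min_le_right _ _, le_max_right _ _⟩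
  have := (convex_Icc (min s t) (max s t)).norm_image_sub_le_of_norm_deriv_le
    (f := deriv φ) (C := C) (fun θ _ => (hd θ)) bound hts hst
  simpa [Real.norm_eq_abs] using this

lemma moment_bound {a b m : ℝ} (ha : 0 < a) (hb : 0 ≤ b) (hm : 0 < m) (s t : ℝ) :
    ((a * (1 + |s| ^ b + |t| ^ b)) ^ (2:ℕ)) ^ (2*m) ≤
      a ^ (4*m) * 3 ^ (4*m) *
        (3 + (|s| ^ max (b*(4*m)) 1 + |t| ^ max (b*(4*m)) 1)) := by
  set S := |s| ^ b with hSdef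
  set T := |t| ^ b with hTdef
  have hS : 0 ≤ S := Real.rpow_nonneg (abs_nonneg _) _
  have hT : 0 ≤ T := Real.rpow_nonneg (abs_nonneg _) _
  set A := a * (1 + S + T) with hA
  have hA0 : 0 < A := by positivity
  set M := max 1 (max S T) with hM
  have hM1 : (1:ℝ) ≤ M := le_max_left _ _
  have hM0 : (0:ℝ) ≤ M := by linarith
  set r₁ := max (b*(4*m)) 1 with hr₁
  have h1 : ((A ^ (2:ℕ)) : ℝ) ^ (2*m) = A ^ (4*m) := by
    rw [← Real.rpow_natCast A 2, ← Real.rpow_mul hA0.le]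
    norm_num
    rw [show (2:ℝ) * (2*m) = 4*m by ring]
  have h2 : A ^ (4*m) = a ^ (4*m) * (1 + S + T) ^ (4*m) :=
    Real.mul_rpow ha.le (by linarith)
  have h3 : (1 + S + T) ^ (4*m) ≤ 3 ^ (4*m) * M ^ (4*m) := by
    rw [← Real.mul_rpow (by norm_num) hM0]
    refine Real.rpow_le_rpow (by linarith) ?_ (by linarith)
    have h4 : S ≤ M := le_trans (le_max_left S T) (le_max_right _ _)
    have h5 : T ≤ M := le_trans (le_max_right S T) (le_max_right _ _)
    linarith
  have hSm : S ^ (4*m) ≤ 1 + |s| ^ r₁ := by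
    rw [hSdef, ← Real.rpow_mul (abs_nonneg _)]
    exact rpow_le_one_add (abs_nonneg _) (by positivity) (le_max_left _ _)
  have hTm : T ^ (4*m) ≤ 1 + |t| ^ r₁ := by
    rw [hTdef, ← Real.rpow_mul (abs_nonneg _)]
    exact rpow_le_one_add (abs_nonneg _) (by positivity) (le_max_left _ _)
  have h5 : M ^ (4*m) ≤ 1 + (S ^ (4*m) + T ^ (4*m)) := by
    have hs4 : 0 ≤ S ^ (4*m) := Real.rpow_nonneg hS _
    have ht4 : 0 ≤ T ^ (4*m) := Real.rpow_nonneg hT _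
    rcases max_choice 1 (max S T) with h | h
    · rw [hM, h, Real.one_rpow]; linarith
    · rcases max_choice S T with h' | h'
      · rw [hM, h, h']; linarith
      · rw [hM, h, h']; linarith
  have h6 : M ^ (4*m) ≤ 3 + (|s| ^ r₁ + |t| ^ r₁) := by linarith
  have ha4 : 0 ≤ a ^ (4*m) := Real.rpow_nonneg ha.le _
  have h34 : (0:ℝ) ≤ 3 ^ (4*m) := Real.rpow_nonneg (by norm_num) _
  calc ((A ^ (2:ℕ)) : ℝ) ^ (2*m) = a ^ (4*m) * (1 + S + T) ^ (4*m) := by rw [h1, h2]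
    _ ≤ a ^ (4*m) * (3 ^ (4*m) * M ^ (4*m)) := mul_le_mul_of_nonneg_left h3 ha4
    _ = a ^ (4*m) * 3 ^ (4*m) * M ^ (4*m) := by ring
    _ ≤ a ^ (4*m) * 3 ^ (4*m) * (3 + (|s| ^ r₁ + |t| ^ r₁)) :=
        mul_le_mul_of_nonneg_left h6 (by positivity)

end Stmt6Aux

open ENNReal in
/-- Let `φ : ℝ → ℝ` be twice continuously differentiable with
`|φ''(x)| ≤ a(1+|x|^b)`. With `U = L²((0,1))`, the sine basis `d_k`, the
projections `P_n` and a probability measure `μ` with the stated moment and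
approximation properties, for every `p ∈ [1,∞)`:
`lim_{n→∞} ∫ (∫₀¹ |φ'((P_n x)(ξ)) − φ'(x(ξ))|² dξ)^{p/2} dμ(x) = 0`,
i.e. `x ↦ φ'∘(P_n x)` converges to `x ↦ φ'∘x` in `L^p(μ; L²((0,1)))`. -/
theorem stmt6
    (φ : ℝ → ℝ) (hφ : ContDiff ℝ 2 φ)
    (a b : ℝ) (ha : 0 < a) (hb : 0 ≤ b)
    (hgrow : ∀ x : ℝ, |deriv (deriv φ) x| ≤ a * (1 + |x| ^ b))
    (d : ℕ → Lp ℝ 2 leb01)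
    (hd : ∀ k : ℕ,
      ⇑(d k) =ᵐ[leb01] fun ξ => Real.sqrt 2 * Real.sin ((k+1) * Real.pi * ξ))
    (P : ℕ → Lp ℝ 2 leb01 → Lp ℝ 2 leb01)
    (hP : ∀ n x, P n x = ∑ k ∈ Finset.range n, (inner ℝ x (d k) : ℝ) • d k)
    [MeasurableSpace (Lp ℝ 2 leb01)] [BorelSpace (Lp ℝ 2 leb01)]
    (μ : Measure (Lp ℝ 2 leb01)) [IsProbabilityMeasure μ]
    (hmom : ∀ r : ℝ, 1 ≤ r →
      (⨆ n : ℕ, ∫⁻ x, (∫⁻ ξ in Set.Ioo (0:ℝ) 1,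
        ENNReal.ofReal (|(P n x) ξ| ^ r + |x ξ| ^ r)) ∂μ) < ⊤)
    (hconv : ∀ r : ℝ, 1 ≤ r →
      Tendsto (fun n : ℕ => ∫⁻ x, (∫⁻ ξ in Set.Ioo (0:ℝ) 1,
        ENNReal.ofReal (|(P n x) ξ - x ξ| ^ r)) ∂μ) atTop (nhds 0))
    (p : ℝ) (hp : 1 ≤ p) :
    Tendsto (fun n : ℕ => ∫⁻ x, (∫⁻ ξ in Set.Ioo (0:ℝ) 1,
        ENNReal.ofReal (|deriv φ ((P n x) ξ) - deriv φ (x ξ)| ^ (2:ℕ))) ^ (p / 2) ∂μ)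
      atTop (nhds 0) := by
  have hleb : volume.restrict (Set.Ioo (0:ℝ) 1) = leb01 := rfl
  simp only [hleb] at hmom hconv ⊢
  set q : ℝ := p / 2 with hqdef
  have hq0 : 0 < q := by rw [hqdef]; linarith
  set m : ℝ := q + 1 with hmdef
  have hm1 : 1 < m := by rw [hmdef]; linarith
  have hm0 : 0 < m := by linarith
  set r₁ : ℝ := max (b * (4 * m)) 1 with hr₁def
  have hr₁1 : 1 ≤ r₁ := le_max_right _ _
  set r₂ : ℝ := 4 * m with hr₂def
  have hr₂1 : 1 < r₂ := by rw [hr₂def]; linarith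
  -- the functional `Θ` and its measurability
  set Θ : Lp ℝ 2 leb01 → ℝ≥0∞ :=
    fun y => ∫⁻ ξ, ENNReal.ofReal (|y ξ| ^ r₂) ∂leb01 with hΘdef
  have hΘmeas : Measurable Θ := Stmt6Aux.theta_measurable hr₂1
  have hPcont : ∀ n, Continuous fun x : Lp ℝ 2 leb01 => P n x - x := by
    intro n
    have h1 : (P n) = fun x => ∑ k ∈ Finset.range n, (inner ℝ x (d k) : ℝ) • d k :=
      funext (hP n)
    rw [h1]
    exact (continuous_finset_sum _ fun k _ =>
      (continuous_id.inner (𝕜 := ℝ) continuous_const).smul continuous_const).sub continuous_id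
  have hΘP : ∀ n, Measurable fun x => Θ (P n x - x) :=
    fun n => hΘmeas.comp ((hPcont n).measurable)
  have hΘeq : ∀ (n : ℕ) (x : Lp ℝ 2 leb01),
      Θ (P n x - x) = ∫⁻ ξ, ENNReal.ofReal (|(P n x) ξ - x ξ| ^ r₂) ∂leb01 := by
    intro n x
    refine lintegral_congr_ae ?_
    filter_upwards [Lp.coeFn_sub (P n x) x] with ξ hξ
    rw [hξ]
    simp [Pi.sub_apply]
  set J : ℕ → ℝ≥0∞ := fun n => ∫⁻ x, Θ (P n x - x) ∂μ with hJdef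
  have hJ0 : Tendsto J atTop (nhds 0) := by
    have h := hconv r₂ hr₂1.le
    have he : (fun n : ℕ =>
        ∫⁻ x, (∫⁻ ξ, ENNReal.ofReal (|(P n x) ξ - x ξ| ^ r₂) ∂leb01) ∂μ) = J := by
      funext n
      exact lintegral_congr fun x => (hΘeq n x).symm
    rwa [he] at h
  -- moment data
  set C₁ : ℝ := a ^ (4*m) * 3 ^ (4*m) with hC₁def
  have hC₁0 : 0 ≤ C₁ := by
    rw [hC₁def]; positivity
  set Tm : ℝ≥0∞ := ⨆ n : ℕ, ∫⁻ x,
      (∫⁻ ξ, ENNReal.ofReal (|(P n x) ξ| ^ r₁ + |x ξ| ^ r₁) ∂leb01) ∂μ with hTmdef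
  have hTmtop : Tm ≠ ∞ := (hmom r₁ hr₁1).ne
  set K : ℝ≥0∞ := ENNReal.ofReal (3 * C₁) + ENNReal.ofReal C₁ * Tm with hKdef
  have hKtop : K ≠ ∞ := by
    rw [hKdef]
    exact ENNReal.add_ne_top.mpr ⟨ENNReal.ofReal_ne_top,
      ENNReal.mul_ne_top ENNReal.ofReal_ne_top hTmtop⟩
  -- key pointwise (in `x`) bound
  have key : ∀ (n : ℕ) (x : Lp ℝ 2 leb01) (η c : ℝ≥0∞),
      η ≠ 0 → η ≠ ∞ → c ≠ 0 → c ≠ ∞ →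
      (∫⁻ ξ, ENNReal.ofReal (|deriv φ ((P n x) ξ) - deriv φ (x ξ)| ^ (2:ℕ)) ∂leb01) ^ q
        ≤ (η ^ q + (η⁻¹ * c⁻¹) * Θ (P n x - x)) + (η⁻¹ * c) *
          (ENNReal.ofReal (3 * C₁) + ENNReal.ofReal C₁ *
            ∫⁻ ξ, ENNReal.ofReal (|(P n x) ξ| ^ r₁ + |x ξ| ^ r₁) ∂leb01) := by
    intro n x η c hη0 hηt hc0 hct
    have hu := (Lp.aestronglyMeasurable (P n x)).aemeasurable
    have hv := (Lp.aestronglyMeasurable x).aemeasurable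
    have hau : AEMeasurable (fun ξ => |(P n x) ξ| ^ b) leb01 :=
      (continuous_abs.measurable.comp_aemeasurable hu).pow_const b
    have hav : AEMeasurable (fun ξ => |x ξ| ^ b) leb01 :=
      (continuous_abs.measurable.comp_aemeasurable hv).pow_const b
    have hB : AEMeasurable (fun ξ => a * (1 + |(P n x) ξ| ^ b + |x ξ| ^ b)) leb01 :=
      ((aemeasurable_const.add hau).add hav).const_mul a
    have hW : AEMeasurable
        (fun ξ => ENNReal.ofReal ((a * (1 + |(P n x) ξ| ^ b + |x ξ| ^ b)) ^ (2:ℕ))) leb01 := by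
      simp_rw [pow_two]
      exact (hB.mul hB).ennreal_ofReal
    have hD : AEMeasurable
        (fun ξ => ENNReal.ofReal (((P n x) ξ - x ξ) ^ (2:ℕ))) leb01 := by
      simp_rw [pow_two]
      exact ((hu.sub hv).mul (hu.sub hv)).ennreal_ofReal
    have hWD : ∀ ξ : ℝ,
        ENNReal.ofReal (|deriv φ ((P n x) ξ) - deriv φ (x ξ)| ^ (2:ℕ)) ≤
          ENNReal.ofReal ((a * (1 + |(P n x) ξ| ^ b + |x ξ| ^ b)) ^ (2:ℕ)) *
            ENNReal.ofReal (((P n x) ξ - x ξ) ^ (2:ℕ)) := by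
      intro ξ
      rw [← ENNReal.ofReal_mul (by positivity)]
      refine ENNReal.ofReal_le_ofReal ?_
      have h0 := Stmt6Aux.deriv_bound φ hφ a b ha hb hgrow ((P n x) ξ) (x ξ)
      calc |deriv φ ((P n x) ξ) - deriv φ (x ξ)| ^ (2:ℕ)
          ≤ (a * (1 + |(P n x) ξ| ^ b + |x ξ| ^ b) * |(P n x) ξ - x ξ|) ^ (2:ℕ) :=
            pow_le_pow_left₀ (abs_nonneg _) h0 2
        _ = _ := by rw [mul_pow, sq_abs]
    have hjen : (∫⁻ ξ, ENNReal.ofReal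
          (|deriv φ ((P n x) ξ) - deriv φ (x ξ)| ^ (2:ℕ)) ∂leb01) ^ m ≤
        ∫⁻ ξ, (ENNReal.ofReal ((a * (1 + |(P n x) ξ| ^ b + |x ξ| ^ b)) ^ (2:ℕ)) *
          ENNReal.ofReal (((P n x) ξ - x ξ) ^ (2:ℕ))) ^ m ∂leb01 :=
      le_trans (ENNReal.rpow_le_rpow (lintegral_mono hWD) hm0.le)
        (Stmt6Aux.jensen _ (hW.mul hD) hm1)
    have hptw : ∀ ξ : ℝ,
        (ENNReal.ofReal ((a * (1 + |(P n x) ξ| ^ b + |x ξ| ^ b)) ^ (2:ℕ)) *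
          ENNReal.ofReal (((P n x) ξ - x ξ) ^ (2:ℕ))) ^ m ≤
        c * (ENNReal.ofReal (3 * C₁) + ENNReal.ofReal C₁ *
            ENNReal.ofReal (|(P n x) ξ| ^ r₁ + |x ξ| ^ r₁)) +
          c⁻¹ * ENNReal.ofReal (|(P n x) ξ - x ξ| ^ r₂) := by
      intro ξ
      have hw0 : (0:ℝ) ≤ (a * (1 + |(P n x) ξ| ^ b + |x ξ| ^ b)) ^ (2:ℕ) := by positivity
      have he0 : (0:ℝ) ≤ ((P n x) ξ - x ξ) ^ (2:ℕ) := by positivity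
      have hwle : ENNReal.ofReal (((a * (1 + |(P n x) ξ| ^ b + |x ξ| ^ b)) ^ (2:ℕ)) ^ (2*m)) ≤
          ENNReal.ofReal (3 * C₁) + ENNReal.ofReal C₁ *
            ENNReal.ofReal (|(P n x) ξ| ^ r₁ + |x ξ| ^ r₁) := by
        have h5 := Stmt6Aux.moment_bound ha hb hm0 ((P n x) ξ) (x ξ)
        calc ENNReal.ofReal (((a * (1 + |(P n x) ξ| ^ b + |x ξ| ^ b)) ^ (2:ℕ)) ^ (2*m))
            ≤ ENNReal.ofReal (C₁ * (3 + (|(P n x) ξ| ^ r₁ + |x ξ| ^ r₁))) := by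
              refine ENNReal.ofReal_le_ofReal ?_
              rw [hC₁def, hr₁def]
              exact h5
          _ = ENNReal.ofReal (3 * C₁ + C₁ * (|(P n x) ξ| ^ r₁ + |x ξ| ^ r₁)) := by
              ring_nf
          _ = ENNReal.ofReal (3 * C₁) +
              ENNReal.ofReal (C₁ * (|(P n x) ξ| ^ r₁ + |x ξ| ^ r₁)) := by
              rw [ENNReal.ofReal_add (by positivity) (by positivity)]
          _ = _ := by rw [ENNReal.ofReal_mul hC₁0]
      have hee : (((P n x) ξ - x ξ) ^ (2:ℕ)) ^ ((2*m) : ℝ) = |(P n x) ξ - x ξ| ^ r₂ := by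
        rw [← sq_abs, ← Real.rpow_natCast |(P n x) ξ - x ξ| 2,
          ← Real.rpow_mul (abs_nonneg _)]
        rw [show ((2:ℕ):ℝ) * (2*m) = r₂ by rw [hr₂def]; push_cast; ring]
      calc (ENNReal.ofReal ((a * (1 + |(P n x) ξ| ^ b + |x ξ| ^ b)) ^ (2:ℕ)) *
            ENNReal.ofReal (((P n x) ξ - x ξ) ^ (2:ℕ))) ^ m
          = ENNReal.ofReal ((a * (1 + |(P n x) ξ| ^ b + |x ξ| ^ b)) ^ (2:ℕ)) ^ m *
            ENNReal.ofReal (((P n x) ξ - x ξ) ^ (2:ℕ)) ^ m :=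
            ENNReal.mul_rpow_of_nonneg _ _ hm0.le
        _ ≤ c * (ENNReal.ofReal ((a * (1 + |(P n x) ξ| ^ b + |x ξ| ^ b)) ^ (2:ℕ)) ^ m *
              ENNReal.ofReal ((a * (1 + |(P n x) ξ| ^ b + |x ξ| ^ b)) ^ (2:ℕ)) ^ m) +
            c⁻¹ * (ENNReal.ofReal (((P n x) ξ - x ξ) ^ (2:ℕ)) ^ m *
              ENNReal.ofReal (((P n x) ξ - x ξ) ^ (2:ℕ)) ^ m) :=
            Stmt6Aux.young _ _ c hc0 hct
        _ = c * ENNReal.ofReal ((a * (1 + |(P n x) ξ| ^ b + |x ξ| ^ b)) ^ (2:ℕ)) ^ (2*m) +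
            c⁻¹ * ENNReal.ofReal (((P n x) ξ - x ξ) ^ (2:ℕ)) ^ (2*m) := by
            rw [Stmt6Aux.rpow_self_mul_self _ hm0.le, Stmt6Aux.rpow_self_mul_self _ hm0.le]
        _ = c * ENNReal.ofReal (((a * (1 + |(P n x) ξ| ^ b + |x ξ| ^ b)) ^ (2:ℕ)) ^ (2*m)) +
            c⁻¹ * ENNReal.ofReal ((((P n x) ξ - x ξ) ^ (2:ℕ)) ^ ((2*m) : ℝ)) := by
            rw [ENNReal.ofReal_rpow_of_nonneg hw0 (by linarith),
              ENNReal.ofReal_rpow_of_nonneg he0 (by linarith)]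
        _ ≤ _ := by
            rw [hee]
            exact add_le_add (mul_le_mul_right hwle _) le_rfl
    have hS : AEMeasurable
        (fun ξ => ENNReal.ofReal (|(P n x) ξ| ^ r₁ + |x ξ| ^ r₁)) leb01 :=
      (((continuous_abs.measurable.comp_aemeasurable hu).pow_const r₁).add
        ((continuous_abs.measurable.comp_aemeasurable hv).pow_const r₁)).ennreal_ofReal
    have hA1 : AEMeasurable (fun ξ => c * (ENNReal.ofReal (3 * C₁) + ENNReal.ofReal C₁ *
        ENNReal.ofReal (|(P n x) ξ| ^ r₁ + |x ξ| ^ r₁))) leb01 :=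
      (aemeasurable_const.add (hS.const_mul _)).const_mul c
    have hsplit : (∫⁻ ξ, (ENNReal.ofReal ((a * (1 + |(P n x) ξ| ^ b + |x ξ| ^ b)) ^ (2:ℕ)) *
          ENNReal.ofReal (((P n x) ξ - x ξ) ^ (2:ℕ))) ^ m ∂leb01) ≤
        c * (ENNReal.ofReal (3 * C₁) + ENNReal.ofReal C₁ *
            ∫⁻ ξ, ENNReal.ofReal (|(P n x) ξ| ^ r₁ + |x ξ| ^ r₁) ∂leb01) +
          c⁻¹ * Θ (P n x - x) := by
      calc (∫⁻ ξ, (ENNReal.ofReal ((a * (1 + |(P n x) ξ| ^ b + |x ξ| ^ b)) ^ (2:ℕ)) *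
            ENNReal.ofReal (((P n x) ξ - x ξ) ^ (2:ℕ))) ^ m ∂leb01)
          ≤ ∫⁻ ξ, (c * (ENNReal.ofReal (3 * C₁) + ENNReal.ofReal C₁ *
              ENNReal.ofReal (|(P n x) ξ| ^ r₁ + |x ξ| ^ r₁)) +
              c⁻¹ * ENNReal.ofReal (|(P n x) ξ - x ξ| ^ r₂)) ∂leb01 := lintegral_mono hptw
        _ = (∫⁻ ξ, c * (ENNReal.ofReal (3 * C₁) + ENNReal.ofReal C₁ *
              ENNReal.ofReal (|(P n x) ξ| ^ r₁ + |x ξ| ^ r₁)) ∂leb01) +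
            ∫⁻ ξ, c⁻¹ * ENNReal.ofReal (|(P n x) ξ - x ξ| ^ r₂) ∂leb01 :=
            lintegral_add_left' hA1 _
        _ = c * (∫⁻ ξ, (ENNReal.ofReal (3 * C₁) + ENNReal.ofReal C₁ *
              ENNReal.ofReal (|(P n x) ξ| ^ r₁ + |x ξ| ^ r₁)) ∂leb01) +
            c⁻¹ * ∫⁻ ξ, ENNReal.ofReal (|(P n x) ξ - x ξ| ^ r₂) ∂leb01 := by
            rw [lintegral_const_mul' _ _ hct,
              lintegral_const_mul' _ _ (ENNReal.inv_ne_top.mpr hc0)]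
        _ = _ := by
            rw [lintegral_add_left measurable_const, lintegral_const, measure_univ, mul_one,
              lintegral_const_mul' _ _ ENNReal.ofReal_ne_top, ← hΘeq n x]
    calc (∫⁻ ξ, ENNReal.ofReal
          (|deriv φ ((P n x) ξ) - deriv φ (x ξ)| ^ (2:ℕ)) ∂leb01) ^ q
        ≤ η ^ q + η⁻¹ * (∫⁻ ξ, ENNReal.ofReal
            (|deriv φ ((P n x) ξ) - deriv φ (x ξ)| ^ (2:ℕ)) ∂leb01) ^ (q + 1) :=
          Stmt6Aux.eta _ η hη0 hηt hq0.le
      _ ≤ η ^ q + η⁻¹ * (c * (ENNReal.ofReal (3 * C₁) + ENNReal.ofReal C₁ *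
            ∫⁻ ξ, ENNReal.ofReal (|(P n x) ξ| ^ r₁ + |x ξ| ^ r₁) ∂leb01) +
            c⁻¹ * Θ (P n x - x)) := by
          refine add_le_add_right (mul_le_mul_right ?_ _) _
          rw [show q + 1 = m from hmdef.symm]
          exact hjen.trans hsplit
      _ = _ := by ring
  -- conclusion
  rw [ENNReal.tendsto_atTop_zero]
  intro ε hε
  obtain ⟨t₁, ht₁0, ht₁t, ht₁⟩ := Stmt6Aux.exists_small 1 (ε/3) one_ne_top
    (ENNReal.div_pos hε.ne' (by norm_num)).ne'
  set η : ℝ≥0∞ := t₁ ^ q⁻¹ with hηdef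
  have hη0 : η ≠ 0 := (ENNReal.rpow_pos (pos_iff_ne_zero.mpr ht₁0) ht₁t).ne'
  have hηt : η ≠ ∞ := ENNReal.rpow_ne_top_of_nonneg (inv_nonneg.mpr hq0.le) ht₁t
  have hηq : η ^ q = t₁ := by
    rw [hηdef, ← ENNReal.rpow_mul, inv_mul_cancel₀ hq0.ne', ENNReal.rpow_one]
  obtain ⟨c, hc0, hct, hc⟩ := Stmt6Aux.exists_small (η⁻¹ * K) (ε/3)
    (ENNReal.mul_ne_top (ENNReal.inv_ne_top.mpr hη0) hKtop)
    (ENNReal.div_pos hε.ne' (by norm_num)).ne'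
  obtain ⟨t₂, ht₂0, ht₂t, ht₂⟩ := Stmt6Aux.exists_small (η⁻¹ * c⁻¹) (ε/3)
    (ENNReal.mul_ne_top (ENNReal.inv_ne_top.mpr hη0) (ENNReal.inv_ne_top.mpr hc0))
    (ENNReal.div_pos hε.ne' (by norm_num)).ne'
  obtain ⟨N, hN⟩ := (ENNReal.tendsto_atTop_zero.mp hJ0) t₂ (pos_iff_ne_zero.mpr ht₂0)
  refine ⟨N, fun n hn => ?_⟩
  have hmeas1 : Measurable fun x : Lp ℝ 2 leb01 =>
      η ^ q + (η⁻¹ * c⁻¹) * Θ (P n x - x) :=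
    measurable_const.add ((hΘP n).const_mul _)
  have hint : (∫⁻ x, (∫⁻ ξ, ENNReal.ofReal
        (|deriv φ ((P n x) ξ) - deriv φ (x ξ)| ^ (2:ℕ)) ∂leb01) ^ q ∂μ) ≤
      (η ^ q + (η⁻¹ * c⁻¹) * J n) + (η⁻¹ * c) * K := by
    calc (∫⁻ x, (∫⁻ ξ, ENNReal.ofReal
          (|deriv φ ((P n x) ξ) - deriv φ (x ξ)| ^ (2:ℕ)) ∂leb01) ^ q ∂μ)
        ≤ ∫⁻ x, ((η ^ q + (η⁻¹ * c⁻¹) * Θ (P n x - x)) + (η⁻¹ * c) *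
            (ENNReal.ofReal (3 * C₁) + ENNReal.ofReal C₁ *
              ∫⁻ ξ, ENNReal.ofReal (|(P n x) ξ| ^ r₁ + |x ξ| ^ r₁) ∂leb01)) ∂μ :=
          lintegral_mono fun x => key n x η c hη0 hηt hc0 hct
      _ = (∫⁻ x, (η ^ q + (η⁻¹ * c⁻¹) * Θ (P n x - x)) ∂μ) +
          ∫⁻ x, (η⁻¹ * c) * (ENNReal.ofReal (3 * C₁) + ENNReal.ofReal C₁ *
            ∫⁻ ξ, ENNReal.ofReal (|(P n x) ξ| ^ r₁ + |x ξ| ^ r₁) ∂leb01) ∂μ :=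
          lintegral_add_left hmeas1 _
      _ = (η ^ q + (η⁻¹ * c⁻¹) * J n) + (η⁻¹ * c) *
          ∫⁻ x, (ENNReal.ofReal (3 * C₁) + ENNReal.ofReal C₁ *
            ∫⁻ ξ, ENNReal.ofReal (|(P n x) ξ| ^ r₁ + |x ξ| ^ r₁) ∂leb01) ∂μ := by
          rw [lintegral_add_left measurable_const, lintegral_const, measure_univ, mul_one,
            lintegral_const_mul _ (hΘP n),
            lintegral_const_mul' _ _ (ENNReal.mul_ne_top (ENNReal.inv_ne_top.mpr hη0) hct),
            hJdef]
      _ ≤ (η ^ q + (η⁻¹ * c⁻¹) * J n) + (η⁻¹ * c) * K := by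
          refine add_le_add_right (mul_le_mul_right ?_ _) _
          rw [lintegral_add_left measurable_const, lintegral_const, measure_univ, mul_one,
            lintegral_const_mul' _ _ ENNReal.ofReal_ne_top, hKdef]
          refine add_le_add_right (mul_le_mul_right ?_ _) _
          rw [hTmdef]
          exact le_iSup (fun n : ℕ => ∫⁻ x,
            (∫⁻ ξ, ENNReal.ofReal (|(P n x) ξ| ^ r₁ + |x ξ| ^ r₁) ∂leb01) ∂μ) n
  refine le_trans hint ?_
  have h1 : η ^ q ≤ ε / 3 := by rw [hηq]; simpa using ht₁
  have h2 : (η⁻¹ * c⁻¹) * J n ≤ ε / 3 :=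
    le_trans (mul_le_mul_right (hN n hn) _) ht₂
  have h3 : (η⁻¹ * c) * K ≤ ε / 3 := by
    calc (η⁻¹ * c) * K = (η⁻¹ * K) * c := by ring
      _ ≤ ε / 3 := hc
  calc (η ^ q + (η⁻¹ * c⁻¹) * J n) + (η⁻¹ * c) * K ≤ (ε/3 + ε/3) + ε/3 :=
        add_le_add (add_le_add h1 h2) h3
    _ = ε := by
        rw [show ε/3 + ε/3 + ε/3 = ε/3 * 3 by ring,
          ENNReal.div_mul_cancel (by norm_num) (by norm_num)]
end

section
/- Let a₁ ∈ [0,∞), a₂ ∈ [0,∞), a₃ ∈ [0,2), let ψ : ℝ → [0,∞) be continuous with ψ(x) ≤ 1 + a₂|x|^{a₃} for all x ∈ ℝ, and set φ(x) = a₁x² + ψ(x). Then for every ε > 0 there exists a constant c ∈ (0,∞) such that for all u ∈ L²((0,1)) and all n ∈ ℕ: ∫₀¹ φ((P_n u)(ξ)) dξ ≤ ∫₀¹ φ(u(ξ)) dξ + c + ε‖u‖²_{L²((0,1))}, all integrals being finite. -/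
open MeasureTheory Set Filter

open Real
open scoped ENNReal NNReal

lemma young_aux (a₂ a₃ ε : ℝ) (ha₂ : 0 ≤ a₂) (ha₃0 : 0 ≤ a₃) (ha₃ : a₃ < 2) (hε : 0 < ε) :
    ∃ C : ℝ, 0 ≤ C ∧ ∀ x : ℝ, a₂ * |x| ^ a₃ ≤ C + ε * x ^ 2 := by
  set M : ℝ := max ((a₂/ε) ^ (1/(2-a₃))) 1 with hM
  have hM1 : 1 ≤ M := le_max_right _ _
  have hM0 : 0 < M := lt_of_lt_of_le one_pos hM1
  have hC0 : 0 ≤ a₂ * M ^ a₃ := mul_nonneg ha₂ (Real.rpow_nonneg hM0.le _)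
  refine ⟨a₂ * M ^ a₃, hC0, fun x => ?_⟩
  rcases le_or_gt |x| M with h | h
  · have h1 : |x| ^ a₃ ≤ M ^ a₃ := Real.rpow_le_rpow (abs_nonneg x) h ha₃0
    nlinarith [sq_nonneg x, mul_le_mul_of_nonneg_left h1 ha₂]
  · have hx1 : 1 < |x| := lt_of_le_of_lt hM1 h
    have hx0 : 0 < |x| := by linarith
    have key : a₂ ≤ ε * |x| ^ (2 - a₃) := by
      have hd : (0:ℝ) < 2 - a₃ := by linarith
      have h1 : (a₂/ε) ^ (1/(2-a₃)) ≤ M := le_max_left _ _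
      have h2 : ((a₂/ε) ^ (1/(2-a₃))) ^ (2-a₃) ≤ M ^ (2-a₃) :=
        Real.rpow_le_rpow (Real.rpow_nonneg (div_nonneg ha₂ hε.le) _) h1 hd.le
      rw [← Real.rpow_mul (div_nonneg ha₂ hε.le), one_div,
        inv_mul_cancel₀ hd.ne', Real.rpow_one] at h2
      have h3 : M ^ (2-a₃) ≤ |x| ^ (2-a₃) := Real.rpow_le_rpow hM0.le h.le hd.le
      have h4 : a₂/ε ≤ |x| ^ (2-a₃) := le_trans h2 h3
      have := mul_le_mul_of_nonneg_left h4 hε.le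
      calc a₂ = ε * (a₂/ε) := by field_simp
        _ ≤ ε * |x|^(2-a₃) := this
    have hsplit : |x| ^ (2-a₃) * |x| ^ a₃ = x^2 := by
      rw [← Real.rpow_add hx0, show (2 - a₃ + a₃ : ℝ) = 2 by ring,
        show (2:ℝ) = ((2:ℕ):ℝ) by norm_num, Real.rpow_natCast, sq_abs]
    have hpow0 : 0 ≤ |x| ^ a₃ := Real.rpow_nonneg (abs_nonneg x) _
    calc a₂ * |x|^a₃ ≤ (ε * |x|^(2-a₃)) * |x|^a₃ := mul_le_mul_of_nonneg_right key hpow0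
      _ = ε * x^2 := by rw [mul_assoc, hsplit]
      _ ≤ a₂*M^a₃ + ε*x^2 := le_add_of_nonneg_left hC0

lemma cos_int_integral (c : ℤ) :
    ∫ x in (0:ℝ)..1, Real.cos ((c:ℝ) * π * x) = if c = 0 then 1 else 0 := by
  rcases eq_or_ne c 0 with rfl | hc
  · simp
  · have hcπ : (c:ℝ) * π ≠ 0 := mul_ne_zero (Int.cast_ne_zero.2 hc) Real.pi_ne_zero
    rw [if_neg hc, intervalIntegral.integral_comp_mul_left Real.cos hcπ]
    simp [integral_cos, Real.sin_int_mul_pi]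

lemma sin_orth (m n : ℕ) :
    ∫ x in (0:ℝ)..1, Real.sin (((m:ℝ)+1) * π * x) * Real.sin (((n:ℝ)+1) * π * x)
      = if m = n then 1/2 else 0 := by
  have key : ∀ x : ℝ, Real.sin (((m:ℝ)+1)*π*x) * Real.sin (((n:ℝ)+1)*π*x)
      = (Real.cos ((((m:ℤ)-(n:ℤ) : ℤ):ℝ)*π*x) - Real.cos ((((m:ℤ)+(n:ℤ)+2 : ℤ):ℝ)*π*x))/2 := by
    intro x
    have h := Real.two_mul_sin_mul_sin (((m:ℝ)+1)*π*x) (((n:ℝ)+1)*π*x)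
    have e1 : ((m:ℝ)+1)*π*x - ((n:ℝ)+1)*π*x = (((m:ℤ)-(n:ℤ) : ℤ):ℝ)*π*x := by push_cast; ring
    have e2 : ((m:ℝ)+1)*π*x + ((n:ℝ)+1)*π*x = (((m:ℤ)+(n:ℤ)+2 : ℤ):ℝ)*π*x := by push_cast; ring
    rw [e1, e2] at h
    linarith
  rw [intervalIntegral.integral_congr (fun x _ => key x)]
  have i1 : IntervalIntegrable (fun x => Real.cos ((((m:ℤ)-(n:ℤ) : ℤ):ℝ)*π*x)) volume 0 1 :=
    (Real.continuous_cos.comp (by continuity)).intervalIntegrable _ _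
  have i2 : IntervalIntegrable (fun x => Real.cos ((((m:ℤ)+(n:ℤ)+2 : ℤ):ℝ)*π*x)) volume 0 1 :=
    (Real.continuous_cos.comp (by continuity)).intervalIntegrable _ _
  rw [intervalIntegral.integral_div, intervalIntegral.integral_sub i1 i2,
    cos_int_integral, cos_int_integral]
  have h2 : ((m:ℤ)+(n:ℤ)+2 : ℤ) ≠ 0 := by omega
  rw [if_neg h2]
  by_cases h : m = n
  · rw [if_pos (by omega), if_pos h]; norm_num
  · rw [if_neg (by omega), if_neg h]; norm_num

lemma lint_sq (f : Lp ℝ 2 leb01) :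
    ∫⁻ ξ, ENNReal.ofReal ((f ξ)^2) ∂leb01 = ENNReal.ofReal (‖f‖^2) := by
  have h1 : ∀ ξ : ℝ, ENNReal.ofReal ((f ξ)^2) = (‖f ξ‖₊ : ℝ≥0∞) ^ (2:ℝ) := by
    intro ξ
    rw [show ((2:ℝ)) = ((2:ℕ):ℝ) by norm_num, ENNReal.rpow_natCast,
      ← ENNReal.ofReal_coe_nnreal, coe_nnnorm, ← ENNReal.ofReal_pow (norm_nonneg _)]
    rw [Real.norm_eq_abs, sq_abs]
  have h2 : eLpNorm (⇑f) 2 leb01 = (∫⁻ ξ, ENNReal.ofReal ((f ξ)^2) ∂leb01) ^ (1/(2:ℝ)) := by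
    rw [eLpNorm_eq_lintegral_rpow_enorm_toReal (two_ne_zero) (ENNReal.ofNat_ne_top)]
    simp only [ENNReal.toReal_ofNat]
    congr 1
    exact lintegral_congr fun ξ => (h1 ξ).symm
  have h3 : (∫⁻ ξ, ENNReal.ofReal ((f ξ)^2) ∂leb01) = (eLpNorm (⇑f) 2 leb01) ^ (2:ℝ) := by
    rw [h2, ← ENNReal.rpow_mul]
    norm_num
  rw [h3, MeasureTheory.Lp.norm_def, ← ENNReal.ofReal_toReal (Lp.eLpNorm_ne_top f),
    show ((2:ℝ)) = ((2:ℕ):ℝ) by norm_num, ENNReal.rpow_natCast,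
    ← ENNReal.ofReal_pow ENNReal.toReal_nonneg, ENNReal.toReal_ofReal ENNReal.toReal_nonneg]

lemma d_orthonormal (d : ℕ → Lp ℝ 2 leb01)
    (hd : ∀ k : ℕ,
      ⇑(d k) =ᵐ[leb01] fun ξ => Real.sqrt 2 * Real.sin ((k+1) * Real.pi * ξ)) :
    Orthonormal ℝ d := by
  rw [orthonormal_iff_ite]
  intro i j
  have hinner : (inner ℝ (d i) (d j) : ℝ) = ∫ a, (d i a) * (d j a) ∂leb01 := by
    rw [MeasureTheory.L2.inner_def]
    simp [RCLike.inner_apply, starRingEnd_apply, mul_comm]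
  rw [hinner, integral_congr_ae (show (fun a => d i a * d j a) =ᵐ[leb01] fun a => (Real.sqrt 2 * Real.sin (((i:ℝ)+1)*π*a)) * (Real.sqrt 2 * Real.sin (((j:ℝ)+1)*π*a)) from (hd i).mul (hd j))]
  have key : ∫ a, (Real.sqrt 2 * Real.sin (((i:ℝ)+1)*π*a)) * (Real.sqrt 2 * Real.sin (((j:ℝ)+1)*π*a)) ∂leb01
      = 2 * ∫ x in (0:ℝ)..1, Real.sin (((i:ℝ)+1)*π*x) * Real.sin (((j:ℝ)+1)*π*x) := by
    rw [show leb01 = volume.restrict (Set.Ioo 0 1) from rfl, ← integral_Ioc_eq_integral_Ioo,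
      ← intervalIntegral.integral_of_le zero_le_one, ← intervalIntegral.integral_const_mul]
    apply intervalIntegral.integral_congr
    intro x _
    have h2 : Real.sqrt 2 * Real.sqrt 2 = 2 := Real.mul_self_sqrt (by norm_num)
    calc (Real.sqrt 2 * Real.sin (((i:ℝ)+1)*π*x)) * (Real.sqrt 2 * Real.sin (((j:ℝ)+1)*π*x))
        = (Real.sqrt 2 * Real.sqrt 2) * (Real.sin (((i:ℝ)+1)*π*x) * Real.sin (((j:ℝ)+1)*π*x)) := by ring
      _ = 2 * (Real.sin (((i:ℝ)+1)*π*x) * Real.sin (((j:ℝ)+1)*π*x)) := by rw [h2]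
  rw [key, sin_orth]
  split_ifs <;> norm_num

lemma proj_norm_le (d : ℕ → Lp ℝ 2 leb01) (hON : Orthonormal ℝ d) (u : Lp ℝ 2 leb01) (n : ℕ) :
    ‖∑ k ∈ Finset.range n, (inner ℝ u (d k) : ℝ) • d k‖^2 ≤ ‖u‖^2 := by
  have h1 : ‖∑ k ∈ Finset.range n, (inner ℝ u (d k) : ℝ) • d k‖^2
      = ∑ k ∈ Finset.range n, ‖(inner ℝ (d k) u : ℝ)‖^2 := by
    rw [← real_inner_self_eq_norm_sq, hON.inner_sum]
    refine Finset.sum_congr rfl fun k _ => ?_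
    rw [starRingEnd_apply, star_trivial, real_inner_comm u (d k),
      Real.norm_eq_abs, sq_abs, sq]
  rw [h1]
  exact hON.sum_inner_products_le u


/-- Let `a₁, a₂ ∈ [0,∞)`, `a₃ ∈ [0,2)`, let `ψ : ℝ → [0,∞)` be
continuous with `ψ(x) ≤ 1 + a₂|x|^{a₃}`, and set `φ(x) = a₁x² + ψ(x)`. Then for
every `ε > 0` there is `c ∈ (0,∞)` such that for all `u ∈ L²((0,1))` and all
`n`: `∫₀¹ φ((P_n u)(ξ)) dξ ≤ ∫₀¹ φ(u(ξ)) dξ + c + ε‖u‖²`, all integrals being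
finite. Here `P_n` is the orthogonal projection onto the span of the first `n`
sine basis vectors `d_k = √2 sin(kπ·)`. -/
theorem stmt8
    (a₁ a₂ a₃ : ℝ) (ha₁ : 0 ≤ a₁) (ha₂ : 0 ≤ a₂) (ha₃0 : 0 ≤ a₃) (ha₃ : a₃ < 2)
    (ψ : ℝ → ℝ) (hψc : Continuous ψ) (hψ0 : ∀ x : ℝ, 0 ≤ ψ x)
    (hψle : ∀ x : ℝ, ψ x ≤ 1 + a₂ * |x| ^ a₃)
    (d : ℕ → Lp ℝ 2 leb01)
    (hd : ∀ k : ℕ,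
      ⇑(d k) =ᵐ[leb01] fun ξ => Real.sqrt 2 * Real.sin ((k+1) * Real.pi * ξ))
    (P : ℕ → Lp ℝ 2 leb01 → Lp ℝ 2 leb01)
    (hP : ∀ n x, P n x = ∑ k ∈ Finset.range n, (inner ℝ x (d k) : ℝ) • d k)
    (ε : ℝ) (hε : 0 < ε) :
    ∃ c : ℝ, 0 < c ∧ ∀ (u : Lp ℝ 2 leb01) (n : ℕ),
      (∫⁻ ξ in Set.Ioo (0:ℝ) 1,
        ENNReal.ofReal (a₁ * (u ξ) ^ 2 + ψ (u ξ))) < ⊤ ∧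
      (∫⁻ ξ in Set.Ioo (0:ℝ) 1,
        ENNReal.ofReal (a₁ * ((P n u) ξ) ^ 2 + ψ ((P n u) ξ))) < ⊤ ∧
      (∫⁻ ξ in Set.Ioo (0:ℝ) 1,
          ENNReal.ofReal (a₁ * ((P n u) ξ) ^ 2 + ψ ((P n u) ξ)))
        ≤ (∫⁻ ξ in Set.Ioo (0:ℝ) 1,
            ENNReal.ofReal (a₁ * (u ξ) ^ 2 + ψ (u ξ)))
          + ENNReal.ofReal c + ENNReal.ofReal (ε * ‖u‖ ^ 2) := by
  obtain ⟨C, hC0, hC⟩ := young_aux a₂ a₃ ε ha₂ ha₃0 ha₃ hε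
  have hON : Orthonormal ℝ d := d_orthonormal d hd
  have hμ : leb01 Set.univ = 1 := by
    rw [show leb01 = volume.restrict (Set.Ioo 0 1) from rfl, Measure.restrict_apply_univ,
      Real.volume_Ioo]
    norm_num
  have haε : (0:ℝ) ≤ a₁ + ε := by linarith
  have bound : ∀ f : Lp ℝ 2 leb01,
      (∫⁻ ξ, ENNReal.ofReal (a₁ * (f ξ)^2 + ψ (f ξ)) ∂leb01)
        ≤ ENNReal.ofReal ((a₁+ε) * ‖f‖^2) + ENNReal.ofReal (1 + C) := by
    intro f
    have step1 : (∫⁻ ξ, ENNReal.ofReal (a₁ * (f ξ)^2 + ψ (f ξ)) ∂leb01)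
        ≤ ∫⁻ ξ, (ENNReal.ofReal ((a₁+ε) * (f ξ)^2) + ENNReal.ofReal (1 + C)) ∂leb01 := by
      refine lintegral_mono fun ξ => ?_
      refine le_trans (ENNReal.ofReal_le_ofReal ?_) ENNReal.ofReal_add_le
      have h1 := hψle (f ξ)
      have h2 := hC (f ξ)
      nlinarith [sq_nonneg (f ξ)]
    refine le_trans step1 ?_
    rw [lintegral_add_right _ measurable_const, lintegral_const, hμ, mul_one]
    refine add_le_add ?_ le_rfl
    have hcong : ∀ ξ:ℝ, ENNReal.ofReal ((a₁+ε) * (f ξ)^2)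
        = ENNReal.ofReal (a₁+ε) * ENNReal.ofReal ((f ξ)^2) := fun ξ => ENNReal.ofReal_mul haε
    rw [lintegral_congr hcong, lintegral_const_mul' _ _ ENNReal.ofReal_ne_top, lint_sq,
      ← ENNReal.ofReal_mul haε]
  refine ⟨1 + C, by linarith, fun u n => ?_⟩
  have hleb : volume.restrict (Set.Ioo (0:ℝ) 1) = leb01 := rfl
  rw [hleb]
  have fin : ∀ f : Lp ℝ 2 leb01,
      (∫⁻ ξ, ENNReal.ofReal (a₁ * (f ξ)^2 + ψ (f ξ)) ∂leb01) < ⊤ :=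
    fun f => lt_of_le_of_lt (bound f)
      (ENNReal.add_lt_top.mpr ⟨ENNReal.ofReal_lt_top, ENNReal.ofReal_lt_top⟩)
  refine ⟨fin u, fin (P n u), ?_⟩
  have hPle : ‖P n u‖^2 ≤ ‖u‖^2 := by rw [hP]; exact proj_norm_le d hON u n
  have lower : ENNReal.ofReal (a₁ * ‖u‖^2)
      ≤ ∫⁻ ξ, ENNReal.ofReal (a₁ * (u ξ)^2 + ψ (u ξ)) ∂leb01 := by
    have heq : ENNReal.ofReal (a₁ * ‖u‖^2) = ∫⁻ ξ, ENNReal.ofReal (a₁ * (u ξ)^2) ∂leb01 := by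
      rw [ENNReal.ofReal_mul ha₁, ← lint_sq u, ← lintegral_const_mul' _ _ ENNReal.ofReal_ne_top]
      exact lintegral_congr fun ξ => (ENNReal.ofReal_mul ha₁).symm
    rw [heq]
    exact lintegral_mono fun ξ => ENNReal.ofReal_le_ofReal (by linarith [hψ0 (u ξ)])
  calc (∫⁻ ξ, ENNReal.ofReal (a₁ * ((P n u) ξ)^2 + ψ ((P n u) ξ)) ∂leb01)
      ≤ ENNReal.ofReal ((a₁+ε) * ‖P n u‖^2) + ENNReal.ofReal (1 + C) := bound (P n u)
    _ ≤ ENNReal.ofReal ((a₁+ε) * ‖u‖^2) + ENNReal.ofReal (1 + C) :=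
        add_le_add (ENNReal.ofReal_le_ofReal (mul_le_mul_of_nonneg_left hPle haε)) le_rfl
    _ = ENNReal.ofReal (a₁ * ‖u‖^2) + ENNReal.ofReal (ε * ‖u‖^2) + ENNReal.ofReal (1 + C) := by
        rw [show (a₁+ε) * ‖u‖^2 = a₁ * ‖u‖^2 + ε * ‖u‖^2 from by ring,
          ENNReal.ofReal_add (mul_nonneg ha₁ (sq_nonneg _)) (mul_nonneg hε.le (sq_nonneg _))]
    _ ≤ (∫⁻ ξ, ENNReal.ofReal (a₁ * (u ξ)^2 + ψ (u ξ)) ∂leb01)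
          + ENNReal.ofReal (1 + C) + ENNReal.ofReal (ε * ‖u‖^2) := by
        rw [add_right_comm]
        exact add_le_add (add_le_add lower le_rfl) le_rfl
end
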